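/- arXiv:2205.11936 — 3 statements merged into one kernel-verified Lean document; each statement's English description precedes it below -/
import Mathlib

section
/- Strong maximum principle, interior positivity (Theorem 2.1(i)). Let g : (α,ω) × ℝ × ℝ → ℝ be an arbitrary function and let v ∈ W^{2,1}_loc(α,ω) ∩ W^{1,1}(α,ω) be a nonnegative function, not identically zero, with v''(t) = g(t, v(t), v'(t)) for almost every t ∈ (α,ω). Assume condition (G): there exist a constant ε > 0 and an absolutely continuous function G : [0,ε] → ℝ such that 0 ≤ g(t, v(t), v'(t)) ≤ G'(v(t)) for almost every t ∈ (α,ω) at which 0 < v(t) ≤ ε and |v'(t)| ≤ ε, and either G(s) = 0 for all s ∈ (0,ε], or G(s) > 0 for all s ∈ (0,ε] and ∫₀^ε ds/√(G(s)) = +∞. Then v(t) > 0 for every t ∈ (α,ω). -/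
open Set Filter MeasureTheory Topology


/-- Square of an integral via Fubini: `(∫_{(a,x]} f)² = 2 ∫_{(a,x]} (∫_{(a,s]} f) f(s) ds`. -/
lemma sq_setIntegral_Ioc (f : ℝ → ℝ) (a x : ℝ) (hf : IntegrableOn f (Ioc a x)) :
    (∫ t in Ioc a x, f t) ^ 2
      = 2 * ∫ s in Ioc a x, (∫ u in Ioc a s, f u) * f s := by
  set μ := volume.restrict (Ioc a x) with hμ
  have hfμ : Integrable f μ := hf
  have hprod : Integrable (fun p : ℝ × ℝ => f p.1 * f p.2) (μ.prod μ) :=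
    hfμ.mul_prod hfμ
  have hT : MeasurableSet {p : ℝ × ℝ | p.2 ≤ p.1} :=
    measurableSet_le measurable_snd measurable_fst
  have hsq : (∫ t in Ioc a x, f t) ^ 2 = ∫ p, f p.1 * f p.2 ∂(μ.prod μ) := by
    rw [integral_prod_mul]; ring
  have hsplit :
      (∫ p in {p : ℝ × ℝ | p.2 ≤ p.1}, f p.1 * f p.2 ∂(μ.prod μ)) +
        ∫ p in {p : ℝ × ℝ | p.2 ≤ p.1}ᶜ, f p.1 * f p.2 ∂(μ.prod μ)
        = ∫ p, f p.1 * f p.2 ∂(μ.prod μ) :=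
    integral_add_compl hT hprod
  -- the first piece
  have h1 : (∫ p in {p : ℝ × ℝ | p.2 ≤ p.1}, f p.1 * f p.2 ∂(μ.prod μ))
      = ∫ u, f u * (∫ s in Ioc a u, f s) ∂μ := by
    rw [← integral_indicator hT]
    rw [integral_prod _ (hprod.indicator hT)]
    refine integral_congr_ae ?_
    filter_upwards [ae_restrict_mem measurableSet_Ioc] with u hu
    have : (fun s => ({p : ℝ × ℝ | p.2 ≤ p.1}).indicator
        (fun p : ℝ × ℝ => f p.1 * f p.2) (u, s))
        = (Iic u).indicator (fun s => f u * f s) := by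
      ext s
      simp only [Set.indicator_apply, Set.mem_setOf_eq, Set.mem_Iic]
    rw [this, integral_indicator measurableSet_Iic]
    rw [integral_const_mul]
    have hset : Iic u ∩ Ioc a x = Ioc a u := by
      ext s
      simp only [Set.mem_inter_iff, Set.mem_Iic, Set.mem_Ioc]
      exact ⟨fun h => ⟨h.2.1, h.1⟩, fun h => ⟨h.2, h.1, h.2.trans hu.2⟩⟩
    rw [hμ, Measure.restrict_restrict measurableSet_Iic, hset]
  -- the second piece
  have h2 : (∫ p in {p : ℝ × ℝ | p.2 ≤ p.1}ᶜ, f p.1 * f p.2 ∂(μ.prod μ))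
      = ∫ s, (∫ u in Ioc a s, f u) * f s ∂μ := by
    rw [← integral_indicator hT.compl]
    rw [integral_prod_symm _ (hprod.indicator hT.compl)]
    refine integral_congr_ae ?_
    filter_upwards [ae_restrict_mem measurableSet_Ioc] with s hs
    have : (fun u => ({p : ℝ × ℝ | p.2 ≤ p.1}ᶜ).indicator
        (fun p : ℝ × ℝ => f p.1 * f p.2) (u, s))
        = (Iio s).indicator (fun u => f u * f s) := by
      ext u
      simp only [Set.indicator_apply, Set.mem_compl_iff, Set.mem_setOf_eq, Set.mem_Iio, not_le]
    rw [this, integral_indicator measurableSet_Iio]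
    have hres : μ.restrict (Iio s) = volume.restrict (Ioo a s) := by
      rw [hμ, Measure.restrict_restrict measurableSet_Iio]
      congr 1
      ext u
      simp only [Set.mem_inter_iff, Set.mem_Iio, Set.mem_Ioc, Set.mem_Ioo]
      exact ⟨fun h => ⟨h.2.1, h.1⟩, fun h => ⟨h.2, h.1, (le_of_lt h.2).trans hs.2⟩⟩
    rw [hres, Measure.restrict_congr_set Ioo_ae_eq_Ioc, integral_mul_const]
  have h1' : (∫ u, f u * (∫ s in Ioc a u, f s) ∂μ)
      = ∫ s, (∫ u in Ioc a s, f u) * f s ∂μ := by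
    refine integral_congr_ae (Eventually.of_forall fun u => ?_)
    ring
  rw [hsq, ← hsplit, h1, h2, h1']
  ring

/-- lintegral change of variables, 1D deriv version -/
lemma lintegral_image_eq_lintegral_abs_deriv_mul' {s : Set ℝ} {f : ℝ → ℝ} {f' : ℝ → ℝ}
    (hs : MeasurableSet s) (hf' : ∀ x ∈ s, HasDerivWithinAt f (f' x) s x)
    (hf : InjOn f s) (g : ℝ → ENNReal) :
    ∫⁻ x in f '' s, g x = ∫⁻ x in s, ENNReal.ofReal |f' x| * g (f x) := by
  simpa only [ContinuousLinearMap.det_toSpanSingleton] using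
    MeasureTheory.lintegral_image_eq_lintegral_abs_det_fderiv_mul volume hs
      (fun x hx => (hf' x hx).hasFDerivWithinAt) hf g

lemma key_lemma (a b ε : ℝ) (hab : a < b) (hε : 0 < ε)
    (w w' w'' G G' : ℝ → ℝ)
    (hderiv : ∀ x ∈ Icc a b, HasDerivAt w (w' x) x)
    (hw''int : IntegrableOn w'' (Icc a b))
    (hftc : ∀ x ∈ Icc a b, w' x = w' a + ∫ t in a..x, w'' t)
    (hwa : w a = 0) (hw'a : w' a = 0)
    (hpos : ∀ x ∈ Ioc a b, 0 < w x)
    (hbound : ∀ x ∈ Icc a b, w x ≤ ε)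
    (hae : ∀ᵐ t ∂volume, t ∈ Ioc a b → 0 ≤ w'' t ∧ w'' t ≤ G' (w t))
    (hG'int : IntegrableOn G' (Icc 0 ε))
    (hGrep : ∀ s ∈ Icc (0:ℝ) ε, G s = G 0 + ∫ r in (0:ℝ)..s, G' r)
    (halt : (∀ s ∈ Ioc (0:ℝ) ε, G s = 0) ∨
        ((∀ s ∈ Ioc (0:ℝ) ε, 0 < G s) ∧
          ¬ IntegrableOn (fun s => 1 / Real.sqrt (G s)) (Ioc 0 ε))) :
    False := by
  -- `w'` as primitive of `w''`
  have hF : ∀ x ∈ Icc a b, w' x = ∫ t in Ioc a x, w'' t := by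
    intro x hx
    rw [hftc x hx, hw'a, zero_add, intervalIntegral.integral_of_le hx.1]
  -- continuity of w'
  have hw'cont : ContinuousOn w' (Icc a b) := by
    have := intervalIntegral.continuousOn_primitive (f := w'') (a := a) (b := b) hw''int
    exact this.congr hF
  -- nonnegativity of w'
  have hw'nonneg : ∀ x ∈ Icc a b, 0 ≤ w' x := by
    intro x hx
    rw [hF x hx]
    refine setIntegral_nonneg_of_ae_restrict ?_
    filter_upwards [ae_restrict_of_ae hae, ae_restrict_mem measurableSet_Ioc] with t h1 h2
    exact (h1 (Ioc_subset_Ioc_right hx.2 h2)).1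
  -- w is continuous and monotone on [a,b]
  have hcontw : ContinuousOn w (Icc a b) := fun x hx =>
    (hderiv x hx).continuousAt.continuousWithinAt
  have hmono : MonotoneOn w (Icc a b) := by
    intro y hy x hx hyx
    have hftc2 : ∫ t in y..x, w' t = w x - w y := by
      refine intervalIntegral.integral_eq_sub_of_hasDerivAt (fun t ht => ?_) ?_
      · refine hderiv t ⟨?_, ?_⟩
        · rw [uIcc_of_le hyx] at ht; exact hy.1.trans ht.1
        · rw [uIcc_of_le hyx] at ht; exact ht.2.trans hx.2
      · refine (hw'cont.mono ?_).intervalIntegrable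
        rw [uIcc_of_le hyx]; exact Icc_subset_Icc hy.1 hx.2
    have : 0 ≤ ∫ t in y..x, w' t := by
      refine intervalIntegral.integral_nonneg hyx fun u hu => ?_
      exact hw'nonneg u ⟨hy.1.trans hu.1, hu.2.trans hx.2⟩
    linarith [hftc2 ▸ this]
  -- w' agrees with deriv w on [a,b]
  have hderiv_eq : ∀ x ∈ Icc a b, deriv w x = w' x := fun x hx => (hderiv x hx).deriv
  -- nonnegativity of w
  have hwnonneg : ∀ x ∈ Icc a b, 0 ≤ w x := by
    intro x hx
    rcases eq_or_lt_of_le hx.1 with h | h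
    · rw [← h, hwa]
    · exact (hpos x ⟨h, hx.2⟩).le
  -- the energy estimate
  have energy : ∀ x ∈ Icc a b, (w' x) ^ 2 ≤ 2 * (G (w x) - G 0) := by
    intro x hx
    have hIoc_sub : Ioc a x ⊆ Icc a b := fun t ht => ⟨ht.1.le, ht.2.trans hx.2⟩
    set S : Set ℝ := Ioc a x ∩ {t | 0 < deriv w t} with hSdef
    have hSmeas : MeasurableSet S :=
      measurableSet_Ioc.inter (measurableSet_lt measurable_const (measurable_deriv w))
    have hSsub : S ⊆ Ioc a x := inter_subset_left
    have hSsub' : S ⊆ Icc a b := fun t ht => hIoc_sub (hSsub ht)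
    have hS' : ∀ t ∈ S, 0 < w' t := fun t ht => (hderiv_eq t (hSsub' ht)) ▸ ht.2
    have hSderivW : ∀ t ∈ S, HasDerivWithinAt w (w' t) S t := fun t ht =>
      (hderiv t (hSsub' ht)).hasDerivWithinAt
    -- injectivity on S
    have haux : ∀ t ∈ S, ∀ t' ∈ S, t < t' → w t = w t' → False := by
      intro t ht t' ht' hlt hww
      have hconst : ∀ s ∈ Icc t t', w s = w t' := by
        intro s hs
        have h1 : w t ≤ w s := hmono (hSsub' ht) (⟨(hSsub' ht).1.trans hs.1, hs.2.trans (hSsub' ht').2⟩) hs.1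
        have h2 : w s ≤ w t' := hmono (⟨(hSsub' ht).1.trans hs.1, hs.2.trans (hSsub' ht').2⟩) (hSsub' ht') hs.2
        rw [hww] at h1; linarith
      have hd0 : HasDerivWithinAt w 0 (Icc t t') t' :=
        (hasDerivWithinAt_const t' _ (w t')).congr hconst
          (hconst t' ⟨hlt.le, le_refl _⟩)
      have hd1 : HasDerivWithinAt w (w' t') (Icc t t') t' :=
        (hderiv t' (hSsub' ht')).hasDerivWithinAt
      have hu : UniqueDiffWithinAt ℝ (Icc t t') t' :=
        uniqueDiffOn_Icc hlt t' ⟨hlt.le, le_refl _⟩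
      have := (hd1.derivWithin hu).symm.trans (hd0.derivWithin hu)
      exact absurd this (ne_of_gt (hS' t' ht'))
    have hinj : InjOn w S := by
      intro t ht t' ht' hww
      by_contra hne
      rcases lt_or_gt_of_ne hne with h | h
      · exact haux t ht t' ht' h hww
      · exact haux t' ht' t ht h hww.symm
    -- image of S
    have himg_sub : w '' S ⊆ Ioc 0 (w x) := by
      rintro y ⟨t, ht, rfl⟩
      exact ⟨hpos t (⟨(hSsub ht).1, (hSsub ht).2.trans hx.2⟩),
        hmono (hSsub' ht) hx (hSsub ht).2⟩
    have himg_sub' : w '' S ⊆ Icc 0 ε := fun y hy =>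
      ⟨(himg_sub hy).1.le, (himg_sub hy).2.trans (hbound x hx)⟩
    -- step 1: the square identity
    have e2 : (w' x) ^ 2 = 2 * ∫ s in Ioc a x, w' s * w'' s := by
      rw [hF x hx, sq_setIntegral_Ioc w'' a x (hw''int.mono_set hIoc_sub)]
      congr 1
      refine setIntegral_congr_fun measurableSet_Ioc fun s hs => ?_
      rw [← hF s (hIoc_sub hs)]
    -- integrability of w' * w''
    obtain ⟨C, hC⟩ := IsCompact.exists_bound_of_continuousOn isCompact_Icc hw'cont
    have e3 : IntegrableOn (fun s => w' s * w'' s) (Ioc a x) := by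
      refine Integrable.bdd_mul (c := C) (hw''int.mono_set hIoc_sub)
        ((hw'cont.mono hIoc_sub).aestronglyMeasurable measurableSet_Ioc) ?_
      filter_upwards [ae_restrict_mem measurableSet_Ioc] with t ht
      exact hC t (hIoc_sub ht)
    -- integrability of w' * G' ∘ w
    have intS : IntegrableOn (fun t => w' t * G' (w t)) S := by
      have h1 : IntegrableOn G' (w '' S) := hG'int.mono_set himg_sub'
      have h2 := (integrableOn_image_iff_integrableOn_abs_deriv_smul hSmeas hSderivW hinj G').mp h1
      refine h2.congr_fun (fun t ht => ?_) hSmeas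
      dsimp only; rw [abs_of_nonneg (hS' t ht).le, smul_eq_mul]
    have hZmeas : MeasurableSet (Ioc a x \ S) := measurableSet_Ioc.diff hSmeas
    have hZ0 : ∀ t ∈ Ioc a x \ S, w' t = 0 := by
      intro t ht
      have : ¬ 0 < deriv w t := fun h => ht.2 ⟨ht.1, h⟩
      have h2 := hderiv_eq t (hIoc_sub ht.1)
      have h3 : w' t ≤ 0 := by rw [← h2]; exact not_lt.mp this
      linarith [hw'nonneg t (hIoc_sub ht.1)]
    have intZ : IntegrableOn (fun t => w' t * G' (w t)) (Ioc a x \ S) := by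
      refine (integrableOn_zero (ε' := ℝ)).congr_fun (fun t ht => ?_) hZmeas
      simp [hZ0 t ht]
    have e4 : IntegrableOn (fun t => w' t * G' (w t)) (Ioc a x) := by
      have := intS.union intZ
      rwa [Set.union_diff_cancel hSsub] at this
    -- comparison of integrals
    have e5 : ∫ s in Ioc a x, w' s * w'' s ≤ ∫ s in Ioc a x, w' s * G' (w s) := by
      refine setIntegral_mono_on_ae e3 e4 measurableSet_Ioc ?_
      filter_upwards [hae] with t ht htIoc
      have h2 := ht (Ioc_subset_Ioc_right hx.2 htIoc)
      exact mul_le_mul_of_nonneg_left h2.2 (hw'nonneg t (hIoc_sub htIoc))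
    -- reduce to S
    have e6 : ∫ s in Ioc a x, w' s * G' (w s) = ∫ s in S, w' s * G' (w s) := by
      have hunion : Ioc a x = S ∪ (Ioc a x \ S) := (Set.union_diff_cancel hSsub).symm
      rw [hunion, setIntegral_union disjoint_sdiff_self_right hZmeas intS intZ]
      have : ∫ s in Ioc a x \ S, w' s * G' (w s) = 0 := by
        rw [setIntegral_congr_fun hZmeas (g := fun _ => (0:ℝ)) (fun t ht => by simp [hZ0 t ht])]
        simp
      rw [this, add_zero]
    -- change of variables
    have e7 : ∫ s in S, w' s * G' (w s) = ∫ y in w '' S, G' y := by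
      rw [integral_image_eq_integral_abs_deriv_smul hSmeas hSderivW hinj G']
      refine setIntegral_congr_fun hSmeas fun t ht => ?_
      rw [abs_of_nonneg (hS' t ht).le, smul_eq_mul]
    -- the image fills (0, w x] up to a null set
    have hT0 : ∀ t ∈ Icc a x \ S, w' t = 0 := by
      intro t ht
      rcases eq_or_lt_of_le ht.1.1 with h | h
      · rw [← h]; exact hw'a
      · exact hZ0 t ⟨⟨h, ht.1.2⟩, ht.2⟩
    have hnull : volume (Ioc 0 (w x) \ w '' S) = 0 := by
      refine measure_mono_null (t := w '' (Icc a x \ S)) ?_ ?_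
      · intro y hy
        obtain ⟨t, ht, hty⟩ := intermediate_value_Icc hx.1
          (hcontw.mono (Icc_subset_Icc_right hx.2)) (⟨hwa ▸ hy.1.1.le, hy.1.2⟩)
        by_cases hts : t ∈ S
        · exact absurd ⟨t, hts, hty⟩ hy.2
        · exact ⟨t, ⟨ht, hts⟩, hty⟩
      · refine addHaar_image_eq_zero_of_det_fderivWithin_eq_zero volume
          (f' := fun t => ContinuousLinearMap.smulRight (1 : ℝ →L[ℝ] ℝ) (w' t))
          (fun t ht => ((hderiv t ⟨ht.1.1, ht.1.2.trans hx.2⟩).hasFDerivAt).hasFDerivWithinAt) ?_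
        intro t ht
        simp only [ContinuousLinearMap.smulRight_one_eq_toSpanSingleton, ContinuousLinearMap.det_toSpanSingleton, hT0 t ht]
    have hsets : w '' S =ᵐ[volume] Ioc 0 (w x) := by
      rw [MeasureTheory.ae_eq_set]
      constructor
      · rw [Set.diff_eq_empty.mpr himg_sub]; exact measure_empty
      · exact hnull
    have e8 : ∫ y in w '' S, G' y = ∫ y in Ioc 0 (w x), G' y := setIntegral_congr_set hsets
    -- FTC for G
    have e9 : ∫ y in Ioc 0 (w x), G' y = G (w x) - G 0 := by
      have hwx : w x ∈ Icc (0:ℝ) ε := ⟨hwnonneg x hx, hbound x hx⟩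
      have := hGrep (w x) hwx
      rw [intervalIntegral.integral_of_le (hwnonneg x hx)] at this
      linarith
    calc (w' x) ^ 2 = 2 * ∫ s in Ioc a x, w' s * w'' s := e2
      _ ≤ 2 * ∫ s in Ioc a x, w' s * G' (w s) := by linarith
      _ = 2 * (G (w x) - G 0) := by rw [e6, e7, e8, e9]
  -- continuity of G on [0, ε]
  have hGcont : ContinuousOn G (Icc 0 ε) := by
    have hprim := intervalIntegral.continuousOn_primitive (f := G') (a := (0:ℝ)) (b := ε)
      (μ := volume) hG'int
    refine ContinuousOn.congr (f := fun x => G 0 + ∫ t in Ioc (0:ℝ) x, G' t)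
      (continuousOn_const.add hprim) fun s hs => ?_
    rw [hGrep s hs, intervalIntegral.integral_of_le hs.1]
  have hne : (𝓝[Ioc (0:ℝ) ε] (0:ℝ)).NeBot := by
    rw [← mem_closure_iff_nhdsWithin_neBot, closure_Ioc hε.ne]
    exact ⟨le_refl _, hε.le⟩
  have hG0lim : Tendsto G (𝓝[Ioc (0:ℝ) ε] 0) (𝓝 (G 0)) :=
    ((hGcont 0 ⟨le_refl _, hε.le⟩).mono_left (nhdsWithin_mono _ Ioc_subset_Icc_self))
  have hbmem : b ∈ Icc a b := ⟨hab.le, le_refl _⟩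
  have hwb : 0 < w b := hpos b ⟨hab, le_refl _⟩
  rcases halt with h0 | ⟨hGpos, hnint⟩
  · -- degenerate case : G ≡ 0 on (0, ε]
    have hG00 : G 0 = 0 := by
      have h2 : Tendsto G (𝓝[Ioc (0:ℝ) ε] 0) (𝓝 0) := by
        refine Tendsto.congr' ?_ tendsto_const_nhds
        filter_upwards [eventually_mem_nhdsWithin] with s hs
        exact (h0 s hs).symm
      exact tendsto_nhds_unique hG0lim h2
    have hw'0 : ∀ x ∈ Ioc a b, w' x = 0 := by
      intro x hx
      have h1 := energy x ⟨hx.1.le, hx.2⟩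
      have h2 : G (w x) = 0 := h0 (w x) ⟨hpos x hx, hbound x ⟨hx.1.le, hx.2⟩⟩
      have h3 : (w' x) ^ 2 ≤ 0 := by rw [h2, hG00] at h1; linarith
      have := sq_nonneg (w' x)
      have h4 : (w' x) ^ 2 = 0 := le_antisymm h3 this
      exact pow_eq_zero_iff two_ne_zero |>.mp h4
    have hFTC : ∫ t in a..b, w' t = w b - w a := by
      refine intervalIntegral.integral_eq_sub_of_hasDerivAt (fun t ht => ?_) ?_
      · rw [uIcc_of_le hab.le] at ht; exact hderiv t ht
      · exact (hw'cont.mono (uIcc_of_le hab.le).subset).intervalIntegrable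
    have hzero : ∫ t in a..b, w' t = 0 := by
      rw [intervalIntegral.integral_of_le hab.le]
      rw [setIntegral_congr_fun measurableSet_Ioc (g := fun _ => (0:ℝ))
        (fun t ht => hw'0 t ht)]
      simp
    rw [hzero, hwa] at hFTC
    linarith
  · -- main case : G > 0 and 1/√G not integrable
    have hG0nn : 0 ≤ G 0 := by
      refine ge_of_tendsto hG0lim ?_
      filter_upwards [eventually_mem_nhdsWithin] with s hs
      exact (hGpos s hs).le
    set m := w b with hmdef
    have hmε : m ≤ ε := hbound b hbmem
    -- the positive-derivative set for the full interval
    set S : Set ℝ := Ioc a b ∩ {t | 0 < deriv w t} with hSdef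
    have hSmeas : MeasurableSet S :=
      measurableSet_Ioc.inter (measurableSet_lt measurable_const (measurable_deriv w))
    have hSsub : S ⊆ Ioc a b := inter_subset_left
    have hSsub' : S ⊆ Icc a b := fun t ht => ⟨(hSsub ht).1.le, (hSsub ht).2⟩
    have hS' : ∀ t ∈ S, 0 < w' t := fun t ht => (hderiv_eq t (hSsub' ht)) ▸ ht.2
    have hSderivW : ∀ t ∈ S, HasDerivWithinAt w (w' t) S t := fun t ht =>
      (hderiv t (hSsub' ht)).hasDerivWithinAt
    have haux : ∀ t ∈ S, ∀ t' ∈ S, t < t' → w t = w t' → False := by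
      intro t ht t' ht' hlt hww
      have hconst : ∀ s ∈ Icc t t', w s = w t' := by
        intro s hs
        have hsmem : s ∈ Icc a b := ⟨(hSsub' ht).1.trans hs.1, hs.2.trans (hSsub' ht').2⟩
        have h1 : w t ≤ w s := hmono (hSsub' ht) hsmem hs.1
        have h2 : w s ≤ w t' := hmono hsmem (hSsub' ht') hs.2
        rw [hww] at h1; linarith
      have hd0 : HasDerivWithinAt w 0 (Icc t t') t' :=
        (hasDerivWithinAt_const t' _ (w t')).congr hconst (hconst t' ⟨hlt.le, le_refl _⟩)
      have hd1 : HasDerivWithinAt w (w' t') (Icc t t') t' :=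
        (hderiv t' (hSsub' ht')).hasDerivWithinAt
      have hu : UniqueDiffWithinAt ℝ (Icc t t') t' := uniqueDiffOn_Icc hlt t' ⟨hlt.le, le_refl _⟩
      have := (hd1.derivWithin hu).symm.trans (hd0.derivWithin hu)
      exact absurd this (ne_of_gt (hS' t' ht'))
    have hinj : InjOn w S := by
      intro t ht t' ht' hww
      by_contra hne2
      rcases lt_or_gt_of_ne hne2 with h | h
      · exact haux t ht t' ht' h hww
      · exact haux t' ht' t ht h hww.symm
    have himg_sub : w '' S ⊆ Ioc 0 m := by
      rintro y ⟨t, ht, rfl⟩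
      exact ⟨hpos t (hSsub ht), hmono (hSsub' ht) hbmem (hSsub ht).2⟩
    have hT0 : ∀ t ∈ Icc a b \ S, w' t = 0 := by
      intro t ht
      rcases eq_or_lt_of_le ht.1.1 with h | h
      · rw [← h]; exact hw'a
      · have : ¬ 0 < deriv w t := fun hc => ht.2 ⟨⟨h, ht.1.2⟩, hc⟩
        have h3 : w' t ≤ 0 := by rw [← hderiv_eq t ht.1]; exact not_lt.mp this
        linarith [hw'nonneg t ht.1]
    have hnull : volume (Ioc 0 m \ w '' S) = 0 := by
      refine measure_mono_null (t := w '' (Icc a b \ S)) ?_ ?_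
      · intro y hy
        obtain ⟨t, ht, hty⟩ := intermediate_value_Icc hab.le hcontw ⟨hwa ▸ hy.1.1.le, hy.1.2⟩
        by_cases hts : t ∈ S
        · exact absurd ⟨t, hts, hty⟩ hy.2
        · exact ⟨t, ⟨ht, hts⟩, hty⟩
      · refine addHaar_image_eq_zero_of_det_fderivWithin_eq_zero volume
          (f' := fun t => ContinuousLinearMap.smulRight (1 : ℝ →L[ℝ] ℝ) (w' t))
          (fun t ht => ((hderiv t ht.1).hasFDerivAt).hasFDerivWithinAt) ?_
        intro t ht
        simp only [ContinuousLinearMap.smulRight_one_eq_toSpanSingleton, ContinuousLinearMap.det_toSpanSingleton, hT0 t ht]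
    have hsets : w '' S =ᵐ[volume] Ioc 0 m := by
      rw [MeasureTheory.ae_eq_set]
      exact ⟨by rw [Set.diff_eq_empty.mpr himg_sub]; exact measure_empty, hnull⟩
    -- pointwise bound on S
    have hkey : ∀ t ∈ S, w' t * (1 / Real.sqrt (2 * G (w t))) ≤ 1 := by
      intro t ht
      have hwt : w t ∈ Ioc (0:ℝ) ε :=
        ⟨hpos t (hSsub ht), hbound t (hSsub' ht)⟩
      have hGwt : 0 < G (w t) := hGpos (w t) hwt
      have h2G : 0 < 2 * G (w t) := by linarith
      have hen := energy t (hSsub' ht)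
      have hsq : (w' t) ^ 2 ≤ 2 * G (w t) := by linarith
      have hle : w' t ≤ Real.sqrt (2 * G (w t)) := Real.le_sqrt_of_sq_le hsq
      rw [mul_one_div]
      exact div_le_one_of_le₀ hle (Real.sqrt_nonneg _)
    -- finiteness of the lintegral of 1/√(2G) over (0, m]
    have hfin : (∫⁻ y in Ioc (0:ℝ) m, ENNReal.ofReal (1 / Real.sqrt (2 * G y))) < ⊤ := by
      rw [← Measure.restrict_congr_set hsets]
      rw [lintegral_image_eq_lintegral_abs_deriv_mul' hSmeas hSderivW hinj]
      have hb1 : (∫⁻ t in S, ENNReal.ofReal |w' t| *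
          ENNReal.ofReal (1 / Real.sqrt (2 * G (w t)))) ≤ ∫⁻ _ in S, 1 := by
        refine lintegral_mono_ae ?_
        filter_upwards [ae_restrict_mem hSmeas] with t ht
        rw [abs_of_nonneg (hS' t ht).le,
          ← ENNReal.ofReal_mul (hS' t ht).le]
        calc ENNReal.ofReal (w' t * (1 / Real.sqrt (2 * G (w t))))
            ≤ ENNReal.ofReal 1 := ENNReal.ofReal_le_ofReal (hkey t ht)
          _ = 1 := ENNReal.ofReal_one
      have hb2 : (∫⁻ _ in S, (1:ENNReal)) ≤ ENNReal.ofReal (b - a) := by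
        rw [setLIntegral_one]
        calc volume S ≤ volume (Ioc a b) := measure_mono hSsub
          _ = ENNReal.ofReal (b - a) := by rw [Real.volume_Ioc]
      exact lt_of_le_of_lt (hb1.trans hb2) ENNReal.ofReal_lt_top
    -- integrability of 1/√(2G) on (0, m]
    have hIocm_sub : Ioc (0:ℝ) m ⊆ Icc 0 ε := fun y hy => ⟨hy.1.le, hy.2.trans hmε⟩
    have hsqrt_cont : ContinuousOn (fun y => Real.sqrt (2 * G y)) (Ioc (0:ℝ) m) :=
      Real.continuous_sqrt.comp_continuousOn
        (continuousOn_const.mul (hGcont.mono hIocm_sub))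
    have hsqrt_ne : ∀ y ∈ Ioc (0:ℝ) m, Real.sqrt (2 * G y) ≠ 0 := by
      intro y hy
      have : 0 < G y := hGpos y ⟨hy.1, hy.2.trans hmε⟩
      exact ne_of_gt (Real.sqrt_pos.mpr (by linarith))
    have hcont2G : ContinuousOn (fun y => 1 / Real.sqrt (2 * G y)) (Ioc (0:ℝ) m) :=
      continuousOn_const.div hsqrt_cont hsqrt_ne
    have hint1 : IntegrableOn (fun y => 1 / Real.sqrt (2 * G y)) (Ioc (0:ℝ) m) := by
      constructor
      · exact hcont2G.aestronglyMeasurable measurableSet_Ioc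
      · rw [hasFiniteIntegral_iff_ofReal]
        · exact hfin
        · exact Eventually.of_forall fun y =>
            one_div_nonneg.mpr (Real.sqrt_nonneg _)
    have hfun : (fun y => 1 / Real.sqrt (G y))
        = fun y => Real.sqrt 2 * (1 / Real.sqrt (2 * G y)) := by
      funext y
      have h2 : Real.sqrt 2 ≠ 0 := by positivity
      rw [Real.sqrt_mul (by norm_num : (0:ℝ) ≤ 2)]
      rcases eq_or_ne (Real.sqrt (G y)) 0 with h | h
      · simp [h]
      · field_simp
    have hint2 : IntegrableOn (fun y => 1 / Real.sqrt (G y)) (Ioc (0:ℝ) m) := by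
      rw [hfun]; exact hint1.const_mul _
    have hint3 : IntegrableOn (fun y => 1 / Real.sqrt (G y)) (Ioc m ε) := by
      have hsub2 : Icc m ε ⊆ Icc (0:ℝ) ε := Icc_subset_Icc hwb.le (le_refl _)
      have hc : ContinuousOn (fun y => 1 / Real.sqrt (G y)) (Icc m ε) := by
        refine continuousOn_const.div
          (Real.continuous_sqrt.comp_continuousOn (hGcont.mono hsub2)) ?_
        intro y hy
        exact ne_of_gt (Real.sqrt_pos.mpr (hGpos y ⟨lt_of_lt_of_le hwb hy.1, hy.2⟩))
      exact hc.integrableOn_Icc.mono_set Ioc_subset_Icc_self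
    have : IntegrableOn (fun y => 1 / Real.sqrt (G y)) (Ioc (0:ℝ) ε) := by
      have := hint2.union hint3
      rwa [Set.Ioc_union_Ioc_eq_Ioc hwb.le hmε] at this
    exact hnint this

/-- **Strong maximum principle, interior positivity (Theorem 2.1(i)).**
`v ∈ W^{2,1}_loc(α,ω) ∩ W^{1,1}(α,ω)` is a nontrivial nonnegative solution of
`v'' = g(t, v, v')` a.e. in `(α,ω)`; under condition (G), `v > 0` on `(α,ω)`. -/
theorem strong_maximum_principle_interior_positivity
    (α ω : ℝ) (hαω : α < ω)
    (g : ℝ → ℝ → ℝ → ℝ) (v v' v'' : ℝ → ℝ)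
    -- v ∈ W^{1,1}(α,ω): v is absolutely continuous on [α,ω] with derivative v' ∈ L¹(α,ω)
    (hv_cont : ContinuousOn v (Icc α ω))
    (hv'_int : IntegrableOn v' (Ioo α ω))
    (hv_ftc : ∀ x ∈ Icc α ω, v x = v α + ∫ t in α..x, v' t)
    -- v ∈ W^{2,1}_loc(α,ω): v is C¹ on (α,ω) and v' is locally absolutely continuous there,
    -- with almost-everywhere derivative v''
    (hv_deriv : ∀ x ∈ Ioo α ω, HasDerivAt v (v' x) x)
    (hv'_cont : ContinuousOn v' (Ioo α ω))
    (hv'_locAC : ∀ c d : ℝ, α < c → c ≤ d → d < ω →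
      IntegrableOn v'' (Icc c d) ∧ ∀ x ∈ Icc c d, v' x = v' c + ∫ t in c..x, v'' t)
    -- v nonnegative and not identically zero
    (hv_nonneg : ∀ t ∈ Icc α ω, 0 ≤ v t)
    (hv_nontriv : ∃ t ∈ Ioo α ω, v t ≠ 0)
    -- the differential equation v'' = g(t, v, v') a.e. in (α,ω)
    (hode : ∀ᵐ t ∂volume, t ∈ Ioo α ω → v'' t = g t (v t) (v' t))
    -- condition (G): G is absolutely continuous on [0,ε] with a.e. derivative G'
    (hG : ∃ ε > (0:ℝ), ∃ G G' : ℝ → ℝ,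
      IntegrableOn G' (Icc 0 ε) ∧
      (∀ s ∈ Icc (0:ℝ) ε, G s = G 0 + ∫ r in (0:ℝ)..s, G' r) ∧
      (∀ᵐ t ∂volume, t ∈ Ioo α ω → 0 < v t → v t ≤ ε → |v' t| ≤ ε →
        0 ≤ g t (v t) (v' t) ∧ g t (v t) (v' t) ≤ G' (v t)) ∧
      ((∀ s ∈ Ioc (0:ℝ) ε, G s = 0) ∨
        ((∀ s ∈ Ioc (0:ℝ) ε, 0 < G s) ∧
          ¬ IntegrableOn (fun s => 1 / Real.sqrt (G s)) (Ioc 0 ε)))) :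
    ∀ t ∈ Ioo α ω, 0 < v t := by
  obtain ⟨ε, hε, G, G', hG'int, hGrep, haeG, halt⟩ := hG
  by_contra hcon
  push_neg at hcon
  obtain ⟨t₀, ht₀, ht₀0⟩ := hcon
  have hv0 : v t₀ = 0 := le_antisymm ht₀0 (hv_nonneg t₀ (Ioo_subset_Icc_self ht₀))
  obtain ⟨t₁, ht₁, ht₁ne⟩ := hv_nontriv
  have hv1 : 0 < v t₁ :=
    lt_of_le_of_ne (hv_nonneg t₁ (Ioo_subset_Icc_self ht₁)) (Ne.symm ht₁ne)
  have hae_all : ∀ᵐ t ∂(volume : Measure ℝ), t ∈ Ioo α ω → 0 < v t → v t ≤ ε → |v' t| ≤ ε →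
      0 ≤ v'' t ∧ v'' t ≤ G' (v t) := by
    filter_upwards [hode, haeG] with t h1 h2 ht hpos' hvε hv'ε
    rw [h1 ht]; exact h2 ht hpos' hvε hv'ε
  -- basic facts at a zero point
  have at_zero : ∀ c ∈ Ioo α ω, v c = 0 →
      v' c = 0 ∧ ∃ δ > 0, ∀ t : ℝ, dist t c < δ →
        (v t ≤ ε ∧ |v' t| ≤ ε ∧ t ∈ Ioo α ω) := by
    intro c hc hvc
    have hmin : IsLocalMin v c := by
      filter_upwards [isOpen_Ioo.mem_nhds hc] with t ht
      rw [hvc]; exact hv_nonneg t (Ioo_subset_Icc_self ht)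
    have hv'c : v' c = 0 := hmin.hasDerivAt_eq_zero (hv_deriv c hc)
    have hv_at : Tendsto v (𝓝 c) (𝓝 0) := by
      have := (hv_deriv c hc).continuousAt.tendsto
      rwa [hvc] at this
    have hv'_at : Tendsto v' (𝓝 c) (𝓝 0) := by
      have := (hv'_cont.continuousAt (isOpen_Ioo.mem_nhds hc)).tendsto
      rwa [hv'c] at this
    have hev : ∀ᶠ t in 𝓝 c, v t ≤ ε ∧ |v' t| ≤ ε ∧ t ∈ Ioo α ω := by
      have e1 : ∀ᶠ t in 𝓝 c, v t < ε := hv_at.eventually_lt_const hε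
      have e2 : ∀ᶠ t in 𝓝 c, |v' t| < ε := by
        have h3 : Tendsto (fun t => |v' t|) (𝓝 c) (𝓝 |0|) := hv'_at.abs
        rw [abs_zero] at h3
        exact h3.eventually_lt_const hε
      filter_upwards [e1, e2, isOpen_Ioo.mem_nhds hc] with t h1 h2 h3
      exact ⟨h1.le, h2.le, h3⟩
    obtain ⟨δ, hδ, hball⟩ := Metric.eventually_nhds_iff.mp hev
    exact ⟨hv'c, δ, hδ, hball⟩
  rcases lt_or_gt_of_ne (fun h : t₀ = t₁ => ht₁ne (h ▸ hv0)) with hlt | hgt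
  · -- case t₀ < t₁ : zero to the left of a positive point
    have hsub : Icc t₀ t₁ ⊆ Ioo α ω := fun t ht => ⟨lt_of_lt_of_le ht₀.1 ht.1, lt_of_le_of_lt ht.2 ht₁.2⟩
    set Z : Set ℝ := Icc t₀ t₁ ∩ v ⁻¹' {0} with hZdef
    have hZclosed : IsClosed Z :=
      ContinuousOn.preimage_isClosed_of_isClosed
        (hv_cont.mono ((hsub.trans Ioo_subset_Icc_self))) isClosed_Icc isClosed_singleton
    have hZne : Z.Nonempty := ⟨t₀, ⟨le_refl _, hlt.le⟩, hv0⟩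
    have hZbdd : BddAbove Z := bddAbove_Icc.mono inter_subset_left
    set c := sSup Z with hcdef
    have hcZ : c ∈ Z := hZclosed.csSup_mem hZne hZbdd
    have hc : c ∈ Ioo α ω := hsub hcZ.1
    have hvc : v c = 0 := hcZ.2
    have hct₁ : c < t₁ := lt_of_le_of_ne hcZ.1.2 (fun h => ht₁ne (h ▸ hvc))
    have hposIoc : ∀ t ∈ Ioc c t₁, 0 < v t := by
      intro t ht
      rcases (hv_nonneg t (Ioo_subset_Icc_self (hsub ⟨(hcZ.1.1.trans ht.1.le), ht.2⟩))).lt_or_eq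
        with h | h
      · exact h
      · exfalso
        have : t ∈ Z := ⟨⟨hcZ.1.1.trans ht.1.le, ht.2⟩, h.symm⟩
        exact absurd (le_csSup hZbdd this) (not_le.mpr ht.1)
    obtain ⟨hv'c, δ, hδ, hball⟩ := at_zero c hc hvc
    set b := min (c + δ/2) t₁ with hbdef
    have hcb : c < b := lt_min (by linarith) hct₁
    have hmem : ∀ t ∈ Icc c b, v t ≤ ε ∧ |v' t| ≤ ε ∧ t ∈ Ioo α ω := by
      intro t ht
      refine hball t ?_
      rw [Real.dist_eq, abs_of_nonneg (by linarith [ht.1])]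
      have : t ≤ c + δ/2 := ht.2.trans (min_le_left _ _)
      linarith
    have hbt₁ : b ≤ t₁ := min_le_right _ _
    refine absurd (key_lemma c b ε hcb hε v v' v'' G G'
      (fun x hx => hv_deriv x (hmem x hx).2.2)
      (hv'_locAC c b hc.1 hcb.le (lt_of_le_of_lt hbt₁ ht₁.2)).1
      (fun x hx => (hv'_locAC c b hc.1 hcb.le (lt_of_le_of_lt hbt₁ ht₁.2)).2 x hx)
      hvc hv'c
      (fun x hx => hposIoc x ⟨hx.1, hx.2.trans hbt₁⟩)
      (fun x hx => (hmem x hx).1)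
      ?_ hG'int hGrep halt) (not_false)
    filter_upwards [hae_all] with t h ht
    have h1 := hmem t ⟨ht.1.le, ht.2⟩
    exact h (h1.2.2) (hposIoc t ⟨ht.1, ht.2.trans hbt₁⟩) h1.1 h1.2.1
  · -- case t₁ < t₀ : zero to the right of a positive point; reflect
    have hsub : Icc t₁ t₀ ⊆ Ioo α ω := fun t ht =>
      ⟨lt_of_lt_of_le ht₁.1 ht.1, lt_of_le_of_lt ht.2 ht₀.2⟩
    set Z : Set ℝ := Icc t₁ t₀ ∩ v ⁻¹' {0} with hZdef
    have hZclosed : IsClosed Z :=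
      ContinuousOn.preimage_isClosed_of_isClosed
        (hv_cont.mono ((hsub.trans Ioo_subset_Icc_self))) isClosed_Icc isClosed_singleton
    have hZne : Z.Nonempty := ⟨t₀, ⟨hgt.le, le_refl _⟩, hv0⟩
    have hZbdd : BddBelow Z := bddBelow_Icc.mono inter_subset_left
    set c := sInf Z with hcdef
    have hcZ : c ∈ Z := hZclosed.csInf_mem hZne hZbdd
    have hc : c ∈ Ioo α ω := hsub hcZ.1
    have hvc : v c = 0 := hcZ.2
    have ht₁c : t₁ < c := lt_of_le_of_ne hcZ.1.1 (fun h => ht₁ne (by rw [h]; exact hvc))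
    have hposIco : ∀ t ∈ Ico t₁ c, 0 < v t := by
      intro t ht
      rcases (hv_nonneg t (Ioo_subset_Icc_self (hsub ⟨ht.1, ht.2.le.trans hcZ.1.2⟩))).lt_or_eq
        with h | h
      · exact h
      · exfalso
        have : t ∈ Z := ⟨⟨ht.1, ht.2.le.trans hcZ.1.2⟩, h.symm⟩
        exact absurd (csInf_le hZbdd this) (not_le.mpr ht.2)
    obtain ⟨hv'c, δ, hδ, hball⟩ := at_zero c hc hvc
    set a := max (c - δ/2) t₁ with hadef
    have hac : a < c := max_lt (by linarith) ht₁c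
    have hat₁ : t₁ ≤ a := le_max_right _ _
    have hmem : ∀ t ∈ Icc a c, v t ≤ ε ∧ |v' t| ≤ ε ∧ t ∈ Ioo α ω := by
      intro t ht
      refine hball t ?_
      rw [Real.dist_eq, abs_of_nonpos (by linarith [ht.2])]
      have : c - δ/2 ≤ t := (le_max_left _ _).trans ht.1
      linarith
    -- the reflection
    set r : ℝ → ℝ := fun t => a + c - t with hrdef
    have hrmem : ∀ t ∈ Icc a c, r t ∈ Icc a c := by
      intro t ht
      exact ⟨by simp only [hrdef]; linarith [ht.2], by simp only [hrdef]; linarith [ht.1]⟩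
    have hAC := hv'_locAC a c (lt_of_lt_of_le ht₁.1 hat₁) hac.le
      (lt_of_le_of_lt hcZ.1.2 ht₀.2)
    have hii : IntervalIntegrable v'' volume a c :=
      (intervalIntegrable_iff_integrableOn_Icc_of_le hac.le).mpr hAC.1
    have hderivr : ∀ x : ℝ, HasDerivAt r (-1) x := fun x => by
      simpa using (hasDerivAt_id x).const_sub (a + c)
    have hw_deriv : ∀ x ∈ Icc a c, HasDerivAt (fun t => v (r t)) (-v' (r x)) x := by
      intro x hx
      have h1 := (hv_deriv (r x) (hmem (r x) (hrmem x hx)).2.2).comp x (hderivr x)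
      simpa [Function.comp_def, mul_comm] using h1
    have hw''int : IntegrableOn (fun t => v'' (r t)) (Icc a c) := by
      have h1 := (hii.comp_sub_left (a + c)).symm
      have h2 : a + c - c = a := by ring
      have h3 : a + c - a = c := by ring
      rw [h2, h3] at h1
      exact (intervalIntegrable_iff_integrableOn_Icc_of_le hac.le).mp h1
    have hwftc : ∀ x ∈ Icc a c, -v' (r x) = -v' (r a) + ∫ t in a..x, v'' (r t) := by
      intro x hx
      have hrx : r x ∈ Icc a c := hrmem x hx
      have h1 : v' (r x) = v' a + ∫ t in a..(r x), v'' t := hAC.2 (r x) hrx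
      have h2 : v' c = v' a + ∫ t in a..c, v'' t := hAC.2 c ⟨hac.le, le_refl _⟩
      have h3 : (∫ t in a..x, v'' (r t)) = ∫ s in (r x)..(a + c - a), v'' s :=
        intervalIntegral.integral_comp_sub_left v'' (a + c)
      have h4 : a + c - a = c := by ring
      rw [h4] at h3
      have h5 : (∫ t in a..(r x), v'' t) + (∫ t in (r x)..c, v'' t) = ∫ t in a..c, v'' t := by
        refine intervalIntegral.integral_add_adjacent_intervals ?_ ?_
        · refine hii.mono_set ?_
          rw [uIcc_of_le hac.le, uIcc_of_le hrx.1]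
          exact Icc_subset_Icc (le_refl _) hrx.2
        · refine hii.mono_set ?_
          rw [uIcc_of_le hac.le, uIcc_of_le hrx.2]
          exact Icc_subset_Icc hrx.1 (le_refl _)
      have h6 : r a = c := by simp only [hrdef]; ring
      rw [h3, h6]
      linarith
    have hwpos : ∀ x ∈ Ioc a c, 0 < v (r x) := by
      intro x hx
      refine hposIco (r x) ⟨hat₁.trans (hrmem x ⟨hx.1.le, hx.2⟩).1, ?_⟩
      simp only [hrdef]; linarith [hx.1]
    have hra : r a = c := by simp only [hrdef]; ring
    refine absurd (key_lemma a c ε hac hε (fun t => v (r t)) (fun t => -v' (r t))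
      (fun t => v'' (r t)) G G'
      hw_deriv hw''int hwftc
      (by simp only [hrdef, add_sub_cancel_left]; exact hvc)
      (by simp only [hrdef, add_sub_cancel_left, hv'c, neg_zero])
      hwpos
      (fun x hx => (hmem (r x) (hrmem x hx)).1)
      ?_ hG'int hGrep halt) not_false
    -- transfer the a.e. hypothesis through the reflection
    have hmp : MeasurePreserving r volume volume :=
      Measure.measurePreserving_sub_left volume (a + c)
    have haer : ∀ᵐ t ∂(volume : Measure ℝ), (r t) ∈ Ioo α ω → 0 < v (r t) →
        v (r t) ≤ ε → |v' (r t)| ≤ ε → 0 ≤ v'' (r t) ∧ v'' (r t) ≤ G' (v (r t)) :=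
      hmp.quasiMeasurePreserving.ae hae_all
    filter_upwards [haer] with t h ht
    have hrt : r t ∈ Icc a c := hrmem t ⟨ht.1.le, ht.2⟩
    have h1 := hmem (r t) hrt
    exact h h1.2.2 (hposIco (r t) ⟨hat₁.trans hrt.1, by simp only [hrdef]; linarith [ht.1]⟩)
      h1.1 h1.2.1
end

section
/- Strong maximum principle, boundary point lemma at the right endpoint (Theorem 2.1(iii)). Let g : (α,ω) × ℝ × ℝ → ℝ be an arbitrary function and let v ∈ W^{2,1}_loc(α,ω) ∩ W^{1,1}(α,ω) be a nonnegative function, not identically zero, with v''(t) = g(t, v(t), v'(t)) for almost every t ∈ (α,ω). Assume condition (G): there exist a constant ε > 0 and an absolutely continuous function G : [0,ε] → ℝ such that 0 ≤ g(t, v(t), v'(t)) ≤ G'(v(t)) for almost every t ∈ (α,ω) at which 0 < v(t) ≤ ε and |v'(t)| ≤ ε, and either G(s) = 0 for all s ∈ (0,ε], or G(s) > 0 for all s ∈ (0,ε] and ∫₀^ε ds/√(G(s)) = +∞. If the continuous extension of v to [α,ω] satisfies v(ω) = 0 and the limit v'(ω⁻) = lim_{t→ω⁻} v'(t) exists in ℝ,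 then v'(ω⁻) < 0. -/
open Set Filter MeasureTheory Topology

lemma fubini_half (H : ℝ → ℝ) (hm : Measurable H) (hi : Integrable H (volume : Measure ℝ)) :
    ∫ x, H x * ∫ s in Iic x, H s = (∫ x, H x) ^ 2 / 2 := by
  set φ : ℝ → ℝ := fun x => ∫ s in Iic x, H s with hφ
  set T : ℝ := ∫ x, H x with hT
  set f : ℝ → ℝ → ℝ := fun x s => if s ≤ x then H x * H s else 0 with hf
  have hkm : Measurable (Function.uncurry f) := by
    have : Function.uncurry f = fun p : ℝ × ℝ =>
        Set.indicator {p : ℝ × ℝ | p.2 ≤ p.1} (fun p => H p.1 * H p.2) p := by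
      funext p
      simp [Function.uncurry, Set.indicator_apply, hf]
    rw [this]
    exact ((hm.comp measurable_fst).mul (hm.comp measurable_snd)).indicator
      (measurableSet_le measurable_snd measurable_fst)
  have hk : Integrable (Function.uncurry f) ((volume : Measure ℝ).prod volume) := by
    refine Integrable.mono' ((hi.abs).mul_prod (hi.abs)) hkm.aestronglyMeasurable ?_
    filter_upwards with p
    rcases le_or_gt p.2 p.1 with h | h
    · simp [Function.uncurry, hf, h, abs_mul, le_refl]
    · simp [Function.uncurry, hf, not_le.2 h, abs_nonneg, mul_nonneg]
  have hinner1 : ∀ x, (∫ s, f x s) = H x * φ x := by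
    intro x
    have : (fun s => f x s) = Set.indicator (Iic x) (fun s => H x * H s) := by
      funext s; simp [hf, Set.indicator_apply]
    rw [this, integral_indicator measurableSet_Iic, integral_const_mul]
  have hinner2 : ∀ s, (∫ x, f x s) = (T - φ s) * H s := by
    intro s
    have h1 : (fun x => f x s) = Set.indicator (Ici s) (fun x => H x * H s) := by
      funext x; simp [hf, Set.indicator_apply]
    rw [h1, integral_indicator measurableSet_Ici]
    rw [integral_mul_const]
    congr 1
    have hcompl : ∫ x in Ici s, H x = ∫ x in (Iic s)ᶜ, H x := by
      rw [compl_Iic]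
      exact setIntegral_congr_set (Ioi_ae_eq_Ici (a := s)).symm
    rw [hcompl]
    have h2 := integral_add_compl (measurableSet_Iic (a := s)) hi
    linarith [h2]
  have hswap : ∫ x, H x * φ x = ∫ s, (T - φ s) * H s := by
    calc ∫ x, H x * φ x = ∫ x, ∫ s, f x s := by
          congr 1; funext x; rw [hinner1]
      _ = ∫ s, ∫ x, f x s := integral_integral_swap hk
      _ = ∫ s, (T - φ s) * H s := by congr 1; funext s; rw [hinner2]
  -- integrability of marginals
  have hmarg : Integrable (fun s => ∫ x, f x s) (volume : Measure ℝ) := by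
    have := hk.integral_prod_right
    simpa using this
  have hmarg' : Integrable (fun s => (T - φ s) * H s) (volume : Measure ℝ) := by
    refine hmarg.congr ?_
    filter_upwards with s; rw [hinner2]
  have hTH : Integrable (fun s => T * H s) (volume : Measure ℝ) := hi.const_mul T
  have hφH : Integrable (fun s => φ s * H s) (volume : Measure ℝ) := by
    have : (fun s => φ s * H s) = fun s => T * H s - (T - φ s) * H s := by
      funext s; ring
    rw [this]; exact hTH.sub hmarg'
  have hsplit : ∫ s, (T - φ s) * H s = T * T - ∫ s, φ s * H s := by
    have : (fun s => (T - φ s) * H s) = fun s => T * H s - φ s * H s := by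
      funext s; ring
    rw [this, integral_sub hTH hφH, integral_const_mul]
  have hcomm : ∫ s, φ s * H s = ∫ x, H x * φ x := by
    congr 1; funext s; ring
  have e1 := hswap
  rw [hsplit, hcomm] at e1
  have hsq : T ^ 2 = T * T := sq T
  linarith

lemma key_energy {a b : ℝ} (hab : a ≤ b) {w h : ℝ → ℝ}
    (hi : IntegrableOn h (Ioc a b) (volume : Measure ℝ))
    (hw : ∀ x ∈ Icc a b, w x = w a + ∫ t in a..x, h t) :
    ∫ x in a..b, 2 * w x * h x = w b ^ 2 - w a ^ 2 := by
  obtain ⟨g₀, hg₀sm, hg₀ae⟩ : ∃ g₀, StronglyMeasurable g₀ ∧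
      h =ᵐ[volume.restrict (Ioc a b)] g₀ :=
    ⟨hi.aestronglyMeasurable.mk h, hi.aestronglyMeasurable.stronglyMeasurable_mk,
      hi.aestronglyMeasurable.ae_eq_mk⟩
  have hig₀ : IntegrableOn g₀ (Ioc a b) (volume : Measure ℝ) := hi.congr_fun_ae hg₀ae
  set H : ℝ → ℝ := (Ioc a b).indicator g₀ with hH
  have hHm : Measurable H := (hg₀sm.measurable).indicator measurableSet_Ioc
  have hHi : Integrable H (volume : Measure ℝ) :=
    hig₀.integrable_indicator measurableSet_Ioc
  set φ : ℝ → ℝ := fun x => ∫ s in Iic x, H s with hφ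
  set T : ℝ := ∫ x, H x with hT
  -- the primitive of h equals φ on [a,b]
  have hprim : ∀ x ∈ Icc a b, (∫ t in a..x, h t) = φ x := by
    intro x hx
    have h1 : (∫ t in a..x, h t) = ∫ t in Ioc a x, h t := intervalIntegral.integral_of_le hx.1
    have h2 : (∫ t in Ioc a x, h t) = ∫ t in Ioc a x, g₀ t :=
      integral_congr_ae (ae_restrict_of_ae_restrict_of_subset (Ioc_subset_Ioc_right hx.2) hg₀ae)
    have h3 : φ x = ∫ t in Iic x ∩ Ioc a b, g₀ t := by
      rw [hφ]; exact setIntegral_indicator measurableSet_Ioc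
    have h4 : Iic x ∩ Ioc a b = Ioc a x := by
      ext u; simp only [mem_inter_iff, mem_Iic, mem_Ioc]
      exact ⟨fun ⟨h5, h6, h7⟩ => ⟨h6, h5⟩, fun ⟨h5, h6⟩ => ⟨h6, h5, h6.trans hx.2⟩⟩
    rw [h1, h2, h3, h4]
  have hTT : T = ∫ t in a..b, h t := by
    rw [hprim b ⟨hab, le_refl b⟩]
    have h5 : (∫ x, H x) = ∫ x in Ioc a b, g₀ x := integral_indicator measurableSet_Ioc
    have h6 : φ b = ∫ x in Ioc a b, g₀ x := by
      have h7 : Iic b ∩ Ioc a b = Ioc a b := by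
        ext u; simp only [mem_inter_iff, mem_Iic, mem_Ioc]; tauto
      rw [hφ]; simp only
      rw [setIntegral_indicator measurableSet_Ioc, h7]
    rw [hT, h5, h6]
  have hwb : w b = w a + T := by rw [hTT]; exact hw b ⟨hab, le_refl b⟩
  -- φ is continuous and bounded
  have hφcont : Continuous φ := by
    have hInt : ∀ c d : ℝ, IntervalIntegrable H volume c d := fun c d =>
      hHi.intervalIntegrable
    have hc : Continuous fun x => ∫ t in (0:ℝ)..x, H t :=
      intervalIntegral.continuous_primitive hInt 0
    have : φ = fun x => φ 0 + ∫ t in (0:ℝ)..x, H t := by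
      funext x
      have := intervalIntegral.integral_Iic_sub_Iic (hHi.integrableOn (s := Iic 0)) (hHi.integrableOn (s := Iic x))
      rw [hφ]; simp only at this ⊢; linarith [this]
    rw [this]
    exact continuous_const.add hc
  have hφbdd : ∀ x, ‖φ x‖ ≤ ∫ s, |H s| := by
    intro x
    calc ‖φ x‖ ≤ ∫ s in Iic x, ‖H s‖ := norm_integral_le_integral_norm _
      _ ≤ ∫ s, |H s| := by
          simpa [Real.norm_eq_abs] using
            setIntegral_le_integral hHi.abs (Eventually.of_forall (fun x => abs_nonneg _))
  have hφH : Integrable (fun x => φ x * H x) (volume : Measure ℝ) :=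
    hHi.bdd_mul hφcont.aestronglyMeasurable (Eventually.of_forall hφbdd)
  -- main computation
  have hfub := fubini_half H hHm hHi
  have hmain : ∫ x in a..b, 2 * w x * h x = 2 * w a * T + T ^ 2 := by
    rw [intervalIntegral.integral_of_le hab]
    have e1 : ∫ x in Ioc a b, 2 * w x * h x = ∫ x in Ioc a b, 2 * (w a + φ x) * H x := by
      apply integral_congr_ae
      filter_upwards [hg₀ae, ae_restrict_mem measurableSet_Ioc] with x hx hmem
      have hwx : w x = w a + φ x := by
        rw [hw x ⟨le_of_lt hmem.1, hmem.2⟩, hprim x ⟨le_of_lt hmem.1, hmem.2⟩]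
      rw [hwx, hx, hH, Set.indicator_of_mem hmem]
    rw [e1]
    have hF : Integrable (fun x => 2 * (w a + φ x) * H x) (volume : Measure ℝ) := by
      have : (fun x => 2 * (w a + φ x) * H x)
          = fun x => (2 * w a) * H x + 2 * (φ x * H x) := by funext x; ring
      rw [this]
      exact (hHi.const_mul _).add (hφH.const_mul 2)
    have e2 : ∫ x in Ioc a b, 2 * (w a + φ x) * H x = ∫ x, 2 * (w a + φ x) * H x := by
      have := integral_add_compl (measurableSet_Ioc (a := a) (b := b)) hF
      have e0 : ∫ x in (Ioc a b)ᶜ, 2 * (w a + φ x) * H x = 0 := by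
        apply setIntegral_eq_zero_of_forall_eq_zero
        intro x hx
        rw [hH, Set.indicator_of_notMem hx]; ring
      linarith
    rw [e2]
    have hHφ : Integrable (fun x => H x * φ x) (volume : Measure ℝ) := by
      have : (fun x => H x * φ x) = fun x => φ x * H x := by funext x; ring
      rw [this]; exact hφH
    calc ∫ x, 2 * (w a + φ x) * H x
        = ∫ x, ((2 * w a) * H x + 2 * (H x * φ x)) := by congr 1; funext x; ring
      _ = 2 * w a * T + T ^ 2 := by
          rw [integral_add (hHi.const_mul _) (hHφ.const_mul 2), integral_const_mul,
            integral_const_mul, hT]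
          simp only [hφ]
          rw [hfub]
          ring
  rw [hmain, hwb]
  ring

set_option maxHeartbeats 2000000 in
/-- **Strong maximum principle, boundary point lemma at the right endpoint (Theorem 2.1(iii)).**
`v ∈ W^{2,1}_loc(α,ω) ∩ W^{1,1}(α,ω)` is a nontrivial nonnegative solution of
`v'' = g(t, v, v')` a.e. in `(α,ω)`; under condition (G), if `v(ω) = 0` and `v'(ω⁻)` exists, then `v'(ω⁻) < 0`. -/
theorem strong_maximum_principle_right_boundary_point
    (α ω : ℝ) (hαω : α < ω)
    (g : ℝ → ℝ → ℝ → ℝ) (v v' v'' : ℝ → ℝ)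
    -- v ∈ W^{1,1}(α,ω): v is absolutely continuous on [α,ω] with derivative v' ∈ L¹(α,ω)
    (hv_cont : ContinuousOn v (Icc α ω))
    (hv'_int : IntegrableOn v' (Ioo α ω))
    (hv_ftc : ∀ x ∈ Icc α ω, v x = v α + ∫ t in α..x, v' t)
    -- v ∈ W^{2,1}_loc(α,ω): v is C¹ on (α,ω) and v' is locally absolutely continuous there,
    -- with almost-everywhere derivative v''
    (hv_deriv : ∀ x ∈ Ioo α ω, HasDerivAt v (v' x) x)
    (hv'_cont : ContinuousOn v' (Ioo α ω))
    (hv'_locAC : ∀ c d : ℝ, α < c → c ≤ d → d < ω →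
      IntegrableOn v'' (Icc c d) ∧ ∀ x ∈ Icc c d, v' x = v' c + ∫ t in c..x, v'' t)
    -- v nonnegative and not identically zero
    (hv_nonneg : ∀ t ∈ Icc α ω, 0 ≤ v t)
    (hv_nontriv : ∃ t ∈ Ioo α ω, v t ≠ 0)
    -- the differential equation v'' = g(t, v, v') a.e. in (α,ω)
    (hode : ∀ᵐ t ∂volume, t ∈ Ioo α ω → v'' t = g t (v t) (v' t))
    -- condition (G): G is absolutely continuous on [0,ε] with a.e. derivative G'
    (hG : ∃ ε > (0:ℝ), ∃ G G' : ℝ → ℝ,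
      IntegrableOn G' (Icc 0 ε) ∧
      (∀ s ∈ Icc (0:ℝ) ε, G s = G 0 + ∫ r in (0:ℝ)..s, G' r) ∧
      (∀ᵐ t ∂volume, t ∈ Ioo α ω → 0 < v t → v t ≤ ε → |v' t| ≤ ε →
        0 ≤ g t (v t) (v' t) ∧ g t (v t) (v' t) ≤ G' (v t)) ∧
      ((∀ s ∈ Ioc (0:ℝ) ε, G s = 0) ∨
        ((∀ s ∈ Ioc (0:ℝ) ε, 0 < G s) ∧
          ¬ IntegrableOn (fun s => 1 / Real.sqrt (G s)) (Ioc 0 ε))))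
    -- boundary behavior: v(ω) = 0 and v'(ω⁻) = L exists
    (hvω : v ω = 0)
    (L : ℝ) (hL : Tendsto v' (𝓝[<] ω) (𝓝 L)) :
    L < 0 := by

  obtain ⟨ε, hε, G, G', hG'int, hGftc, hGae, hGcases⟩ := hG
  by_contra hLneg
  push_neg at hLneg
  -- basic integrability of v'
  have hv'Ioc : ∀ x y : ℝ, α ≤ x → y ≤ ω → IntegrableOn v' (Ioc x y) volume := by
    intro x y hx hy
    rcases le_or_gt y x with h | h
    · rw [Ioc_eq_empty (not_lt.2 h)]; exact integrableOn_empty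
    · refine (integrableOn_Ioc_iff_integrableOn_Ioo).2 (hv'_int.mono_set ?_)
      intro u hu; exact ⟨lt_of_le_of_lt hx hu.1, lt_of_lt_of_le hu.2 hy⟩
  have hv'ii : ∀ x y : ℝ, α ≤ x → x ≤ y → y ≤ ω → IntervalIntegrable v' volume x y := by
    intro x y hx hxy hy
    rw [intervalIntegrable_iff_integrableOn_Ioc_of_le hxy]
    exact hv'Ioc x y hx hy
  have hvdiff : ∀ x y : ℝ, x ∈ Icc α ω → y ∈ Icc α ω → x ≤ y →
      v y - v x = ∫ s in x..y, v' s := by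
    intro x y hx hy hxy
    have h1 := hv_ftc x hx
    have h2 := hv_ftc y hy
    have h3 := intervalIntegral.integral_add_adjacent_intervals
      (hv'ii α x (le_refl α) hx.1 hx.2) (hv'ii x y hx.1 hxy hy.2)
    linarith
  have hne_ae : ∀ z : ℝ, ∀ᵐ x : ℝ ∂volume, x ≠ z := by
    intro z
    rw [ae_iff]
    have : {x : ℝ | ¬ x ≠ z} = {z} := by ext u; simp
    rw [this]
    exact measure_singleton z
  -- Step 1 : L ≤ 0, hence L = 0
  have hL0 : L = 0 := by
    refine le_antisymm ?_ hLneg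
    by_contra hpos
    push_neg at hpos
    have hev : ∀ᶠ x in 𝓝[<] ω, L/2 ≤ v' x := hL.eventually (eventually_ge_nhds (by linarith))
    obtain ⟨l, hl, hsub⟩ := mem_nhdsLT_iff_exists_Ioo_subset.1 hev
    set t := (max l α + ω)/2 with ht
    have hmax : max l α < ω := max_lt hl hαω
    have htlt : max l α < t := by rw [ht]; linarith
    have htω : t < ω := by rw [ht]; linarith
    have htα : α < t := lt_of_le_of_lt (le_max_right l α) htlt
    have htmem : t ∈ Icc α ω := ⟨htα.le, htω.le⟩
    have hint : v ω - v t = ∫ s in t..ω, v' s := hvdiff t ω htmem ⟨hαω.le, le_refl ω⟩ htω.le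
    have hlow : (L/2) * (ω - t) ≤ ∫ s in t..ω, v' s := by
      rw [intervalIntegral.integral_of_le htω.le]
      calc (L/2) * (ω - t) = ∫ _ in Ioc t ω, (L/2) ∂volume := by
            rw [setIntegral_const, measureReal_def, Real.volume_Ioc, ENNReal.toReal_ofReal (by linarith),
              smul_eq_mul, mul_comm]
        _ ≤ ∫ s in Ioc t ω, v' s := by
            refine setIntegral_mono_ae_restrict
              (integrableOn_const ?_) (hv'Ioc t ω htα.le (le_refl ω)) ?_
            · rw [Real.volume_Ioc]; exact ENNReal.ofReal_ne_top
            · filter_upwards [ae_restrict_mem measurableSet_Ioc,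
                ae_restrict_of_ae (hne_ae ω)] with x hx hxω
              exact hsub ⟨lt_of_le_of_lt (le_max_left l α) (htlt.trans hx.1),
                lt_of_le_of_ne hx.2 hxω⟩
    have hvt := hv_nonneg t htmem
    have : 0 < (L/2) * (ω - t) := mul_pos (by linarith) (by linarith)
    rw [hvω] at hint
    linarith
  -- combined limit helper
  have hvb : ∀ b, α < b → b ≤ ω → v b = 0 →
      Tendsto v (𝓝[<] b) (𝓝 0) ∧ Tendsto v' (𝓝[<] b) (𝓝 0) := by
    intro b hαb hbω hvb0
    rcases eq_or_lt_of_le hbω with heq | hb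
    · subst heq
      constructor
      · have h1 : Tendsto v (𝓝[Icc α b] b) (𝓝 (v b)) :=
          hv_cont.continuousWithinAt ⟨hαb.le, le_refl b⟩
        rw [hvb0] at h1
        refine h1.mono_left ?_
        rw [← nhdsWithin_Ioo_eq_nhdsLT hαb]
        exact nhdsWithin_mono _ Ioo_subset_Icc_self
      · rw [← hL0]; exact hL
    · have hbmem : b ∈ Ioo α ω := ⟨hαb, hb⟩
      have hmin : IsLocalMin v b := by
        have : ∀ᶠ x in 𝓝 b, v b ≤ v x := by
          filter_upwards [Ioo_mem_nhds hαb hb] with x hx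
          rw [hvb0]; exact hv_nonneg x (Ioo_subset_Icc_self hx)
        exact this
      have hv'b : v' b = 0 := hmin.hasDerivAt_eq_zero (hv_deriv b hbmem)
      have hca : ContinuousAt v b := (hv_deriv b hbmem).continuousAt
      have hca' : ContinuousAt v' b := hv'_cont.continuousAt (isOpen_Ioo.mem_nhds hbmem)
      constructor
      · have := hca.tendsto.mono_left (nhdsWithin_le_nhds (s := Iio b))
        rwa [hvb0] at this
      · have := hca'.tendsto.mono_left (nhdsWithin_le_nhds (s := Iio b))
        rwa [hv'b] at this
  -- the vanishing point c
  set S := {t : ℝ | t ∈ Icc α ω ∧ ∀ s ∈ Icc t ω, v s = 0} with hS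
  have hωS : ω ∈ S :=
    ⟨⟨hαω.le, le_refl ω⟩, fun s hs => by rw [le_antisymm hs.2 hs.1, hvω]⟩
  have hSne : S.Nonempty := ⟨ω, hωS⟩
  have hSbdd : BddBelow S := ⟨α, fun x hx => hx.1.1⟩
  set c := sInf S with hc
  have hcω : c ≤ ω := csInf_le hSbdd hωS
  have hαc' : α ≤ c := le_csInf hSne (fun x hx => hx.1.1)
  have hzero : ∀ t, c < t → t ≤ ω → v t = 0 := by
    intro t hct htω
    obtain ⟨s, hsS, hst⟩ := exists_lt_of_csInf_lt hSne hct
    exact hsS.2 t ⟨hst.le, htω⟩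
  have hvc : v c = 0 := by
    rcases eq_or_lt_of_le hcω with heq | hcω'
    · rw [heq]; exact hvω
    · have h1 : Tendsto v (𝓝[Ioo c ω] c) (𝓝 (v c)) :=
        (hv_cont.continuousWithinAt ⟨hαc', hcω⟩).mono_left
          (nhdsWithin_mono _ (fun x hx => ⟨hαc'.trans hx.1.le, hx.2.le⟩))
      have h2 : Tendsto v (𝓝[Ioo c ω] c) (𝓝 0) := by
        refine Tendsto.congr' ?_ tendsto_const_nhds
        filter_upwards [self_mem_nhdsWithin] with x hx using (hzero x hx.1 hx.2.le).symm
      have hnb : (𝓝[Ioo c ω] c).NeBot := by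
        rw [nhdsWithin_Ioo_eq_nhdsGT hcω']; infer_instance
      exact tendsto_nhds_unique h1 h2
  have hαc : α < c := by
    rcases eq_or_lt_of_le hαc' with heq | h
    · obtain ⟨t, ht, hne⟩ := hv_nontriv
      exact absurd (hzero t (heq ▸ ht.1) ht.2.le) hne
    · exact h
  have hnontrivc : ∀ t, α < t → t < c → ∃ s, t ≤ s ∧ s < c ∧ v s ≠ 0 := by
    intro t hαt htc
    have htS : t ∉ S := notMem_of_lt_csInf htc hSbdd
    have hnall : ¬ ∀ s ∈ Icc t ω, v s = 0 := fun h => htS ⟨⟨hαt.le, (htc.trans_le hcω).le⟩, h⟩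
    push_neg at hnall
    obtain ⟨s, hs, hvs⟩ := hnall
    refine ⟨s, hs.1, ?_, hvs⟩
    rcases lt_trichotomy s c with h | h | h
    · exact h
    · exact absurd (by rw [h]; exact hvc) hvs
    · exact absurd (hzero s h hs.2) hvs
  obtain ⟨hvtc, hv'tc⟩ := hvb c hαc hcω hvc
  -- smallness region
  have hev1 : ∀ᶠ x in 𝓝[<] c, v x ≤ ε := hvtc.eventually (eventually_le_nhds hε)
  have hev2 : ∀ᶠ x in 𝓝[<] c, |v' x| ≤ ε := by
    have habs : Tendsto (fun x => |v' x|) (𝓝[<] c) (𝓝 |0|) := hv'tc.abs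
    rw [abs_zero] at habs
    exact habs.eventually (eventually_le_nhds hε)
  obtain ⟨l₁, hl₁, hsub₁⟩ := mem_nhdsLT_iff_exists_Ioo_subset.1 (hev1.and hev2)
  set t₁ := max l₁ α with ht₁
  have ht₁c : t₁ < c := max_lt hl₁ hαc
  have hαt₁ : α ≤ t₁ := le_max_right _ _
  have propG : ∀ x, t₁ < x → x < c → v x ≤ ε ∧ |v' x| ≤ ε := fun x h1 h2 =>
    hsub₁ ⟨lt_of_le_of_lt (le_max_left _ _) h1, h2⟩
  -- a point where v is positive
  obtain ⟨s₀, hs₀1, hs₀c, hs₀ne⟩ :=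
    hnontrivc ((t₁ + c)/2) (by linarith [hαt₁, ht₁c]) (by linarith [ht₁c])
  have ht₁s₀ : t₁ < s₀ := by linarith [hs₀1, ht₁c]
  have hαs₀ : α < s₀ := lt_of_le_of_lt hαt₁ ht₁s₀
  have hs₀ω : s₀ < ω := lt_of_lt_of_le hs₀c hcω
  have hs₀pos : 0 < v s₀ := (hv_nonneg s₀ ⟨hαs₀.le, hs₀ω.le⟩).lt_of_ne (Ne.symm hs₀ne)
  -- first zero after s₀
  set Z := Icc s₀ c ∩ (Icc α ω ∩ v ⁻¹' {0}) with hZ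
  have hZclosed : IsClosed Z :=
    IsClosed.inter isClosed_Icc
      (hv_cont.preimage_isClosed_of_isClosed isClosed_Icc isClosed_singleton)
  have hcZ : c ∈ Z := ⟨⟨hs₀c.le, le_refl c⟩, ⟨hαc.le, hcω⟩, hvc⟩
  have hZbdd : BddBelow Z := ⟨s₀, fun x hx => hx.1.1⟩
  set b₂ := sInf Z with hb₂
  have hb₂Z : b₂ ∈ Z := hZclosed.csInf_mem ⟨c, hcZ⟩ hZbdd
  have hvb₂ : v b₂ = 0 := hb₂Z.2.2
  have hb₂c : b₂ ≤ c := csInf_le hZbdd hcZ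
  have hs₀b₂ : s₀ < b₂ :=
    lt_of_le_of_ne hb₂Z.1.1 (fun h => hs₀ne (h ▸ hvb₂))
  have hb₂ω : b₂ ≤ ω := hb₂c.trans hcω
  have hαb₂ : α < b₂ := hαs₀.trans hs₀b₂
  have hpos : ∀ x, s₀ ≤ x → x < b₂ → 0 < v x := by
    intro x hx1 hx2
    have hxZ : x ∉ Z := notMem_of_lt_csInf hx2 hZbdd
    have hxΙ : x ∈ Icc α ω := ⟨hαs₀.le.trans hx1, (hx2.trans_le hb₂ω).le⟩
    have hxc : x < c := lt_of_lt_of_le hx2 hb₂c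
    refine (hv_nonneg x hxΙ).lt_of_ne fun h => hxZ ⟨⟨hx1, hxc.le⟩, hxΙ, h.symm⟩
  obtain ⟨hvtb₂, hv'tb₂⟩ := hvb b₂ hαb₂ hb₂ω hvb₂
  -- a.e. control of v'' on (s₀, b₂)
  have hkeyae : ∀ᵐ u ∂(volume : Measure ℝ),
      s₀ < u → u < b₂ → (0 ≤ v'' u ∧ v'' u ≤ G' (v u)) := by
    filter_upwards [hode, hGae] with u h1 h2 hu1 hu2
    have huΙ : u ∈ Ioo α ω := ⟨hαs₀.trans hu1, lt_of_lt_of_le hu2 hb₂ω⟩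
    have hupos : 0 < v u := hpos u hu1.le hu2
    have hprop := propG u (ht₁s₀.trans hu1) (lt_of_lt_of_le hu2 hb₂c)
    have h3 := h2 huΙ hupos hprop.1 hprop.2
    rw [h1 huΙ]
    exact h3
  -- v' is monotone nondecreasing on (s₀, b₂)
  have hmono : ∀ x y, s₀ < x → x ≤ y → y < b₂ → v' x ≤ v' y := by
    intro x y hx hxy hy
    have hyw : y < ω := lt_of_lt_of_le hy hb₂ω
    have hax : α < x := hαs₀.trans hx
    have hftc := (hv'_locAC x y hax hxy hyw).2 y ⟨hxy, le_refl y⟩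
    have hnn : 0 ≤ ∫ u in x..y, v'' u := by
      rw [intervalIntegral.integral_of_le hxy]
      apply setIntegral_nonneg_of_ae_restrict
      filter_upwards [ae_restrict_mem measurableSet_Ioc, ae_restrict_of_ae hkeyae] with u hu hk
      exact (hk (hx.trans hu.1) (lt_of_le_of_lt hu.2 hy)).1
    linarith
  have hv'le : ∀ x, s₀ < x → x < b₂ → v' x ≤ 0 := by
    intro x hx hxb
    refine ge_of_tendsto hv'tb₂ ?_
    filter_upwards [Ioo_mem_nhdsLT_of_mem (⟨hxb, le_refl b₂⟩ : b₂ ∈ Ioc x b₂)] with τ hτ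
    exact hmono x τ hx hτ.1.le hτ.2
  have hvanti : ∀ x y, s₀ < x → x ≤ y → y < b₂ → v y ≤ v x := by
    intro x y hx hxy hyb
    have hxm : x ∈ Icc α ω := ⟨(hαs₀.trans hx).le, ((lt_of_le_of_lt hxy hyb).trans_le hb₂ω).le⟩
    have hym : y ∈ Icc α ω := ⟨hxm.1.trans hxy, (hyb.trans_le hb₂ω).le⟩
    have hd := hvdiff x y hxm hym hxy
    have h0 : 0 ≤ ∫ s in x..y, -v' s :=
      intervalIntegral.integral_nonneg hxy
        (fun u hu => neg_nonneg.2 (hv'le u (hx.trans_le hu.1) (lt_of_le_of_lt hu.2 hyb)))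
    rw [intervalIntegral.integral_neg] at h0
    linarith
  -- primitive of G'
  set Gi : ℝ → ℝ := (Icc (0:ℝ) ε).indicator G' with hGi
  have hGiInt : Integrable Gi volume := hG'int.integrable_indicator measurableSet_Icc
  set P : ℝ → ℝ := fun a => ∫ u in (0:ℝ)..a, Gi u with hP
  have hPcont : Continuous P :=
    intervalIntegral.continuous_primitive (fun a b => hGiInt.intervalIntegrable) 0
  have hP0 : P 0 = 0 := intervalIntegral.integral_same
  have hPG' : ∀ a b : ℝ, 0 ≤ a → a ≤ b → b ≤ ε →
      ∫ u in Ioo a b, G' u = P b - P a := by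
    intro a b ha hab hb
    have h1 : ∫ u in Ioo a b, G' u = ∫ u in Ioc a b, G' u := setIntegral_congr_set Ioo_ae_eq_Ioc
    have h2 : ∫ u in Ioc a b, G' u = ∫ u in Ioc a b, Gi u :=
      setIntegral_congr_fun measurableSet_Ioc
        (fun u hu => (Set.indicator_of_mem (show u ∈ Icc (0:ℝ) ε from ⟨ha.trans hu.1.le, hu.2.trans hb⟩) G').symm)
    have h3 := intervalIntegral.integral_add_adjacent_intervals (a := (0:ℝ)) (b := a) (c := b)
      hGiInt.intervalIntegrable hGiInt.intervalIntegrable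
    have h4 : ∫ u in Ioc a b, Gi u = ∫ u in a..b, Gi u :=
      (intervalIntegral.integral_of_le hab).symm
    rw [h1, h2, h4, hP]
    simp only
    linarith
  have hGP : ∀ a, 0 ≤ a → a ≤ ε → G a = G 0 + P a := by
    intro a ha haε
    rw [hGftc a ⟨ha, haε⟩]
    have h2 : ∫ r in (0:ℝ)..a, G' r = P a := by
      rw [intervalIntegral.integral_of_le ha]
      calc ∫ r in Ioc 0 a, G' r = ∫ r in Ioo 0 a, G' r :=
            (setIntegral_congr_set Ioo_ae_eq_Ioc).symm
        _ = P a - P 0 := hPG' 0 a (le_refl _) ha haε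
        _ = P a := by rw [hP0]; ring
    rw [h2]
  have hGtend : Tendsto G (𝓝[>] (0:ℝ)) (𝓝 (G 0)) := by
    have h1 : Tendsto (fun a => G 0 + P a) (𝓝[>] (0:ℝ)) (𝓝 (G 0 + P 0)) :=
      ((continuous_const.add hPcont).tendsto 0).mono_left nhdsWithin_le_nhds
    rw [hP0, add_zero] at h1
    refine h1.congr' ?_
    filter_upwards [Ioo_mem_nhdsGT_of_mem (⟨le_refl (0:ℝ), hε⟩ : (0:ℝ) ∈ Ico (0:ℝ) ε)] with a ha
    exact (hGP a ha.1.le ha.2.le).symm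
  -- change of variables machinery
  have hchange : ∀ t τ, s₀ < t → t < τ → τ < b₂ →
      MeasurableSet {x | x ∈ Ioo t τ ∧ v' x ≠ 0} ∧
      {x | x ∈ Ioo t τ ∧ v' x ≠ 0} ⊆ Ioo t τ ∧
      ∀ r : ℝ → ℝ,
        (∫ u in Ioo (v τ) (v t), r u
            = ∫ x in {x | x ∈ Ioo t τ ∧ v' x ≠ 0}, |v' x| * r (v x)) ∧
        (IntegrableOn r (Ioo (v τ) (v t)) volume ↔
          IntegrableOn (fun x => |v' x| * r (v x)) {x | x ∈ Ioo t τ ∧ v' x ≠ 0} volume) := by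
    intro t τ hst htτ hτb
    have hαt : α < t := hαs₀.trans hst
    have hτω : τ < ω := lt_of_lt_of_le hτb hb₂ω
    set E := {x | x ∈ Ioo t τ ∧ v' x ≠ 0} with hEdef
    have hEsub : E ⊆ Ioo t τ := fun x hx => hx.1
    have hEsubαω : E ⊆ Ioo α ω := fun x hx => ⟨hαt.trans hx.1.1, hx.1.2.trans hτω⟩
    have hEopen : IsOpen E := by
      have h1 : IsOpen (Ioo α ω ∩ v' ⁻¹' ({0}ᶜ)) :=
        hv'_cont.isOpen_inter_preimage isOpen_Ioo (isOpen_compl_iff.2 isClosed_singleton)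
      have h2 : E = Ioo t τ ∩ (Ioo α ω ∩ v' ⁻¹' ({0}ᶜ)) := by
        ext x
        constructor
        · rintro ⟨hx1, hx2⟩
          exact ⟨hx1, ⟨hαt.trans hx1.1, hx1.2.trans hτω⟩, hx2⟩
        · rintro ⟨hx1, _, hx2⟩
          exact ⟨hx1, hx2⟩
      rw [h2]
      exact isOpen_Ioo.inter h1
    have hEmeas : MeasurableSet E := hEopen.measurableSet
    have hEderiv : ∀ x ∈ E, HasDerivWithinAt v (v' x) E x := fun x hx =>
      (hv_deriv x (hEsubαω hx)).hasDerivWithinAt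
    have hvτt : v τ ≤ v t := hvanti t τ hst htτ.le hτb
    have hInj0 : ∀ x y, x ∈ E → y ∈ E → x < y → v x = v y → False := by
      intro x y hx hy hlt hxy
      have hsx : s₀ < x := hst.trans hx.1.1
      have hyb : y < b₂ := hy.1.2.trans hτb
      have hconst : ∀ z ∈ Icc x y, v z = v x := by
        intro z hz
        have h1 : v z ≤ v x := hvanti x z hsx hz.1 (lt_of_le_of_lt hz.2 hyb)
        have h2 : v y ≤ v z := hvanti z y (lt_of_lt_of_le hsx hz.1) hz.2 hyb
        rw [← hxy] at h2
        exact le_antisymm h1 h2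
      have hd1 : HasDerivWithinAt v 0 (Icc x y) x := by
        have h0 : HasDerivWithinAt (fun _ : ℝ => v x) 0 (Icc x y) x :=
          hasDerivWithinAt_const _ _ _
        exact h0.congr hconst (hconst x ⟨le_refl x, hlt.le⟩)
      have hd2 : HasDerivWithinAt v (v' x) (Icc x y) x :=
        (hv_deriv x (hEsubαω hx)).hasDerivWithinAt
      have hu : UniqueDiffWithinAt ℝ (Icc x y) x := (uniqueDiffOn_Icc hlt) x ⟨le_refl x, hlt.le⟩
      exact hx.2 (hu.eq_deriv _ hd2 hd1)
    have hInj : InjOn v E := by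
      intro x hx y hy hxy
      rcases lt_trichotomy x y with h | h | h
      · exact (hInj0 x y hx hy h hxy).elim
      · exact h
      · exact (hInj0 y x hy hx h hxy.symm).elim
    have hNnull : volume (v '' {x | x ∈ Ioo t τ ∧ v' x = 0}) = 0 := by
      refine addHaar_image_eq_zero_of_det_fderivWithin_eq_zero volume
        (f' := fun _ => (1 : ℝ →L[ℝ] ℝ).smulRight (0:ℝ)) ?_ ?_
      · intro x hx
        have h1 := hv_deriv x ⟨hαt.trans hx.1.1, hx.1.2.trans hτω⟩
        rw [hx.2] at h1
        exact h1.hasFDerivAt.hasFDerivWithinAt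
      · intro x _
        have := ContinuousLinearMap.det_toSpanSingleton (0:ℝ)
        convert this using 2 <;> ext <;> simp
    have himg_sub : v '' E ⊆ Icc (v τ) (v t) := by
      rintro u ⟨x, hx, rfl⟩
      exact ⟨hvanti x τ (hst.trans hx.1.1) hx.1.2.le hτb,
        hvanti t x hst hx.1.1.le (hx.1.2.trans hτb)⟩
    have himg_sup : Ioo (v τ) (v t) \ v '' {x | x ∈ Ioo t τ ∧ v' x = 0} ⊆ v '' E := by
      rintro u ⟨hu, huN⟩
      have hcont : ContinuousOn v (Icc t τ) :=
        hv_cont.mono (fun z hz => ⟨hαt.le.trans hz.1, hz.2.trans hτω.le⟩)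
      obtain ⟨x, hx, hvx⟩ := intermediate_value_Ioo' htτ.le hcont hu
      by_cases hv'x : v' x = 0
      · exact absurd ⟨x, ⟨hx, hv'x⟩, hvx⟩ huN
      · exact ⟨x, ⟨hx, hv'x⟩, hvx⟩
    have hae_set : v '' E =ᵐ[volume] Ioo (v τ) (v t) := by
      rw [ae_eq_set]
      constructor
      · refine measure_mono_null (fun u hu => ?_)
          (?_ : volume ({v τ, v t} : Set ℝ) = 0)
        · have h1 : u ∈ Icc (v τ) (v t) \ Ioo (v τ) (v t) := ⟨himg_sub hu.1, hu.2⟩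
          rwa [Icc_diff_Ioo_same hvτt] at h1
        · rw [Set.insert_eq]
          exact measure_union_null (measure_singleton _) (measure_singleton _)
      · refine measure_mono_null (fun u hu => ?_) hNnull
        by_contra h
        exact hu.2 (himg_sup ⟨hu.1, h⟩)
    refine ⟨hEmeas, hEsub, fun r => ?_⟩
    have hCoV := integral_image_eq_integral_abs_deriv_smul hEmeas hEderiv hInj r
    constructor
    · rw [← setIntegral_congr_set hae_set, hCoV]
      simp only [smul_eq_mul]
    · have hsm : (fun x => |v' x| * r (v x)) = (fun x => |v' x| • r (v x)) := by
        funext x; rw [smul_eq_mul]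
      rw [hsm]
      constructor
      · intro h
        exact (integrableOn_image_iff_integrableOn_abs_deriv_smul hEmeas hEderiv hInj r).1
          (h.congr_set_ae hae_set)
      · intro h
        exact ((integrableOn_image_iff_integrableOn_abs_deriv_smul hEmeas hEderiv
          hInj r).2 h).congr_set_ae hae_set.symm
  -- the key differential inequality
  have hkey2 : ∀ t, s₀ < t → t < b₂ → v' t ^ 2 ≤ 2 * P (v t) := by
    intro t hst htb
    have hαt : α < t := hαs₀.trans hst
    have htc' : t < c := lt_of_lt_of_le htb hb₂c
    have hvtpos : 0 < v t := hpos t hst.le htb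
    have hvtε : v t ≤ ε := (propG t (ht₁s₀.trans hst) htc').1
    have ineq : ∀ τ, t < τ → τ < b₂ →
        v' t ^ 2 ≤ v' τ ^ 2 + 2 * (P (v t) - P (v τ)) := by
      intro τ htτ hτb
      have hτω : τ < ω := lt_of_lt_of_le hτb hb₂ω
      have hτc : τ < c := lt_of_lt_of_le hτb hb₂c
      have hvτpos : 0 < v τ := hpos τ (hst.le.trans htτ.le) hτb
      have hvτε : v τ ≤ ε := (propG τ (ht₁s₀.trans (hst.trans htτ)) hτc).1
      have hvτt : v τ ≤ v t := hvanti t τ hst htτ.le hτb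
      obtain ⟨hv''int, hv''ftc⟩ := hv'_locAC t τ hαt htτ.le hτω
      have hv''Ioc : IntegrableOn v'' (Ioc t τ) volume := hv''int.mono_set Ioc_subset_Icc_self
      have henergy : ∫ x in t..τ, 2 * v' x * v'' x = v' τ ^ 2 - v' t ^ 2 :=
        key_energy htτ.le hv''Ioc hv''ftc
      obtain ⟨hEmeas, hEsub, hch⟩ := hchange t τ hst htτ hτb
      obtain ⟨hveq, hviff⟩ := hch G'
      have hG'img : IntegrableOn G' (Ioo (v τ) (v t)) volume :=
        hG'int.mono_set (fun u hu => ⟨hvτpos.le.trans hu.1.le, hu.2.le.trans hvtε⟩)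
      have hCoVint : IntegrableOn (fun x => |v' x| * G' (v x))
          {x | x ∈ Ioo t τ ∧ v' x ≠ 0} volume := hviff.1 hG'img
      have hf2E : ∀ x ∈ {x | x ∈ Ioo t τ ∧ v' x ≠ 0},
          -2 * v' x * G' (v x) = 2 * (|v' x| * G' (v x)) := by
        intro x hx
        have hv'x : v' x ≤ 0 := hv'le x (hst.trans hx.1.1) (hx.1.2.trans hτb)
        rw [abs_of_nonpos hv'x]; ring
      have hf2intE : IntegrableOn (fun x => -2 * v' x * G' (v x))
          {x | x ∈ Ioo t τ ∧ v' x ≠ 0} volume :=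
        MeasureTheory.IntegrableOn.congr_fun (hCoVint.const_mul 2)
          (fun x hx => (hf2E x hx).symm) hEmeas
      have hf2zero : ∀ᵐ x ∂(volume.restrict (Ioc t τ \ {x | x ∈ Ioo t τ ∧ v' x ≠ 0})),
          -2 * v' x * G' (v x) = 0 := by
        filter_upwards [ae_restrict_mem (measurableSet_Ioc.diff hEmeas),
          ae_restrict_of_ae (hne_ae τ)] with x hx hxτ
        have hxIoo : x ∈ Ioo t τ := ⟨hx.1.1, lt_of_le_of_ne hx.1.2 hxτ⟩
        have hv'0 : v' x = 0 := by
          by_contra h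
          exact hx.2 ⟨hxIoo, h⟩
        rw [hv'0]; ring
      have hf2intD : IntegrableOn (fun x => -2 * v' x * G' (v x))
          (Ioc t τ \ {x | x ∈ Ioo t τ ∧ v' x ≠ 0}) volume := by
        refine (integrable_zero _ _ _).congr ?_
        filter_upwards [hf2zero] with x hx using hx.symm
      have hsplitset : Ioc t τ
          = (Ioc t τ \ {x | x ∈ Ioo t τ ∧ v' x ≠ 0}) ∪ {x | x ∈ Ioo t τ ∧ v' x ≠ 0} := by
        rw [diff_union_self,
          union_eq_self_of_subset_right (fun x hx => Ioo_subset_Ioc_self (hEsub hx))]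
      have hf2int : IntegrableOn (fun x => -2 * v' x * G' (v x)) (Ioc t τ) volume := by
        rw [hsplitset]; exact hf2intD.union hf2intE
      have hval : ∫ x in Ioc t τ, -2 * v' x * G' (v x)
          = 2 * ∫ u in Ioo (v τ) (v t), G' u := by
        rw [hsplitset, setIntegral_union disjoint_sdiff_self_left hEmeas hf2intD hf2intE,
          integral_eq_zero_of_ae hf2zero, zero_add,
          setIntegral_congr_fun hEmeas hf2E, integral_const_mul, ← hveq]
      have hIocsub : Ioc t τ ⊆ Ioo α ω := fun u hu => ⟨hαt.trans hu.1, hu.2.trans_lt hτω⟩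
      have hint1 : IntegrableOn (fun x => -2 * v' x * v'' x) (Ioc t τ) volume := by
        refine Integrable.mono' (hv''Ioc.abs.const_mul (2*ε)) ?_ ?_
        · exact ((((hv'_cont.mono hIocsub).aestronglyMeasurable
            measurableSet_Ioc).const_mul (-2)).mul hv''Ioc.aestronglyMeasurable)
        · filter_upwards [ae_restrict_mem measurableSet_Ioc] with x hx
          have hv'ε : |v' x| ≤ ε := (propG x (ht₁s₀.trans (hst.trans hx.1))
            ((hx.2.trans_lt hτb).trans_le hb₂c)).2
          have hn : ‖-2 * v' x * v'' x‖ = 2 * |v' x| * |v'' x| := by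
            rw [Real.norm_eq_abs, abs_mul, abs_mul]
            norm_num
          rw [hn]
          nlinarith [abs_nonneg (v' x), abs_nonneg (v'' x)]
      have hcomp : ∫ x in Ioc t τ, -2 * v' x * v'' x
          ≤ ∫ x in Ioc t τ, -2 * v' x * G' (v x) := by
        refine setIntegral_mono_ae_restrict hint1 hf2int ?_
        filter_upwards [ae_restrict_mem measurableSet_Ioc, ae_restrict_of_ae hkeyae] with x hx hk
        have h2 := hk (hst.trans hx.1) (lt_of_le_of_lt hx.2 hτb)
        have hv'x : v' x ≤ 0 := hv'le x (hst.trans hx.1) (lt_of_le_of_lt hx.2 hτb)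
        have h3 : (0:ℝ) ≤ -2 * v' x := by linarith
        calc -2 * v' x * v'' x = (-2 * v' x) * v'' x := by ring
          _ ≤ (-2 * v' x) * G' (v x) := mul_le_mul_of_nonneg_left h2.2 h3
          _ = -2 * v' x * G' (v x) := by ring
      have hrel : ∫ x in Ioc t τ, -2 * v' x * v'' x = v' t ^ 2 - v' τ ^ 2 := by
        have h1 : ∫ x in Ioc t τ, -2 * v' x * v'' x
            = - ∫ x in Ioc t τ, 2 * v' x * v'' x := by
          rw [← integral_neg]
          congr 1
          funext x
          ring
        rw [h1, ← intervalIntegral.integral_of_le htτ.le, henergy]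
        ring
      have hPab := hPG' (v τ) (v t) hvτpos.le hvτt hvtε
      rw [hrel, hval, hPab] at hcomp
      linarith
    have hPvb : Tendsto (fun τ => P (v τ)) (𝓝[<] b₂) (𝓝 (P 0)) :=
      (hPcont.tendsto 0).comp hvtb₂
    have hlim : Tendsto (fun τ => v' τ ^ 2 + 2 * (P (v t) - P (v τ))) (𝓝[<] b₂)
        (𝓝 ((0:ℝ) ^ 2 + 2 * (P (v t) - P 0))) :=
      (hv'tb₂.pow 2).add ((tendsto_const_nhds.sub hPvb).const_mul 2)
    have heq0 : ((0:ℝ) ^ 2 + 2 * (P (v t) - P 0)) = 2 * P (v t) := by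
      rw [hP0]; ring
    rw [heq0] at hlim
    refine ge_of_tendsto hlim ?_
    filter_upwards [Ioo_mem_nhdsLT_of_mem (⟨htb, le_refl b₂⟩ : b₂ ∈ Ioc t b₂)] with τ hτ
    exact ineq τ hτ.1 hτ.2
  -- final case analysis on condition (G)
  rcases hGcases with hGzero | ⟨hGpos, hGni⟩
  · -- case G ≡ 0 on (0, ε]
    have hG00 : G 0 = 0 := by
      have h2 : Tendsto G (𝓝[>] (0:ℝ)) (𝓝 0) := by
        refine Tendsto.congr' ?_ tendsto_const_nhds
        filter_upwards [Ioo_mem_nhdsGT_of_mem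
          (⟨le_refl (0:ℝ), hε⟩ : (0:ℝ) ∈ Ico (0:ℝ) ε)] with a ha
        exact (hGzero a ⟨ha.1, ha.2.le⟩).symm
      exact tendsto_nhds_unique hGtend h2
    have hv'zero : ∀ x, s₀ < x → x < b₂ → v' x = 0 := by
      intro x h1 h2
      have h3 := hkey2 x h1 h2
      have hvxpos : 0 < v x := hpos x h1.le h2
      have hvxε : v x ≤ ε := (propG x (ht₁s₀.trans h1) (lt_of_lt_of_le h2 hb₂c)).1
      have h4 : P (v x) = 0 := by
        have h5 := hGP (v x) hvxpos.le hvxε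
        rw [hGzero (v x) ⟨hvxpos, hvxε⟩, hG00] at h5
        linarith
      rw [h4] at h3
      have h6 : v' x ^ 2 = 0 := le_antisymm (by linarith) (sq_nonneg _)
      exact pow_eq_zero_iff (by norm_num : (2:ℕ) ≠ 0) |>.1 h6
    set x₀ := (s₀ + b₂)/2 with hx₀
    have hx₀1 : s₀ < x₀ := by rw [hx₀]; linarith [hs₀b₂]
    have hx₀2 : x₀ < b₂ := by rw [hx₀]; linarith [hs₀b₂]
    have hconst : ∀ᶠ τ in 𝓝[<] b₂, v τ = v x₀ := by
      filter_upwards [Ioo_mem_nhdsLT_of_mem (⟨hx₀2, le_refl b₂⟩ : b₂ ∈ Ioc x₀ b₂)] with τ hτ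
      have hx₀m : x₀ ∈ Icc α ω := ⟨(hαs₀.trans hx₀1).le, (hx₀2.trans_le hb₂ω).le⟩
      have hτm : τ ∈ Icc α ω := ⟨hx₀m.1.trans hτ.1.le, (hτ.2.trans_le hb₂ω).le⟩
      have hdiff := hvdiff x₀ τ hx₀m hτm hτ.1.le
      have hint0 : ∫ s in x₀..τ, v' s = 0 := by
        rw [intervalIntegral.integral_of_le hτ.1.le]
        apply integral_eq_zero_of_ae
        filter_upwards [ae_restrict_mem measurableSet_Ioc] with u hu
        exact hv'zero u (hx₀1.trans hu.1) (lt_of_le_of_lt hu.2 hτ.2)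
      linarith
    have h0 : Tendsto v (𝓝[<] b₂) (𝓝 (v x₀)) := by
      refine Tendsto.congr' ?_ tendsto_const_nhds
      filter_upwards [hconst] with τ h using h.symm
    have hvx₀0 : v x₀ = 0 := tendsto_nhds_unique h0 hvtb₂
    exact absurd hvx₀0 (ne_of_gt (hpos x₀ hx₀1.le hx₀2))
  · -- case G > 0 on (0, ε] and 1/√G not integrable
    have hG0nn : 0 ≤ G 0 := by
      refine ge_of_tendsto hGtend ?_
      filter_upwards [Ioo_mem_nhdsGT_of_mem
        (⟨le_refl (0:ℝ), hε⟩ : (0:ℝ) ∈ Ico (0:ℝ) ε)] with a ha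
      exact (hGpos a ⟨ha.1, ha.2.le⟩).le
    have hGcont : ContinuousOn G (Icc 0 ε) := by
      have h1 : ContinuousOn (fun a => G 0 + P a) (Icc 0 ε) :=
        (continuous_const.add hPcont).continuousOn
      exact h1.congr (fun a ha => hGP a ha.1 ha.2)
    have hqcont : ContinuousOn (fun u => 1 / Real.sqrt (G u)) (Ioc 0 ε) := by
      apply ContinuousOn.div continuousOn_const
      · exact Real.continuous_sqrt.comp_continuousOn (hGcont.mono Ioc_subset_Icc_self)
      · intro u hu
        exact ne_of_gt (Real.sqrt_pos.2 (hGpos u hu))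
    have hqnn : ∀ u : ℝ, 0 ≤ 1 / Real.sqrt (G u) := by
      intro u; positivity
    have hbound : ∀ x, s₀ < x → x < b₂ →
        |v' x| * (1 / Real.sqrt (G (v x))) ≤ Real.sqrt 2 := by
      intro x h1 h2
      have hvx : 0 < v x := hpos x h1.le h2
      have hvxε : v x ≤ ε := (propG x (ht₁s₀.trans h1) (lt_of_lt_of_le h2 hb₂c)).1
      have hGvx : 0 < G (v x) := hGpos (v x) ⟨hvx, hvxε⟩
      have h3 := hkey2 x h1 h2
      have h4 : P (v x) = G (v x) - G 0 := by
        have := hGP (v x) hvx.le hvxε; linarith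
      have h5 : v' x ^ 2 ≤ 2 * G (v x) := by rw [h4] at h3; linarith
      have h6 : |v' x| ≤ Real.sqrt (2 * G (v x)) := by
        rw [← Real.sqrt_sq_eq_abs]
        exact Real.sqrt_le_sqrt h5
      have h7 : Real.sqrt (2 * G (v x)) = Real.sqrt 2 * Real.sqrt (G (v x)) :=
        Real.sqrt_mul (by norm_num) _
      have h8 : 0 < Real.sqrt (G (v x)) := Real.sqrt_pos.2 hGvx
      rw [mul_one_div, div_le_iff₀ h8, ← h7]
      exact h6
    set t := (s₀ + b₂)/2 with htdef
    have hst : s₀ < t := by rw [htdef]; linarith [hs₀b₂]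
    have htb : t < b₂ := by rw [htdef]; linarith [hs₀b₂]
    have hvtpos : 0 < v t := hpos t hst.le htb
    have hvtε : v t ≤ ε := (propG t (ht₁s₀.trans hst) (lt_of_lt_of_le htb hb₂c)).1
    have hτbound : ∀ τ, t < τ → τ < b₂ →
        IntegrableOn (fun u => 1 / Real.sqrt (G u)) (Ioo (v τ) (v t)) volume ∧
        ∫ u in Ioo (v τ) (v t), 1 / Real.sqrt (G u) ≤ Real.sqrt 2 * (ω - α) := by
      intro τ htτ hτb
      obtain ⟨hEmeas, hEsub, hch⟩ := hchange t τ hst htτ hτb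
      obtain ⟨hveq, hviff⟩ := hch (fun u => 1 / Real.sqrt (G u))
      have hEfin : volume {x | x ∈ Ioo t τ ∧ v' x ≠ 0} < ⊤ :=
        lt_of_le_of_lt (measure_mono hEsub) measure_Ioo_lt_top
      have hsubαω : {x | x ∈ Ioo t τ ∧ v' x ≠ 0} ⊆ Ioo α ω := fun x hx =>
        ⟨(hαs₀.trans hst).trans hx.1.1, hx.1.2.trans (lt_of_lt_of_le hτb hb₂ω)⟩
      have hEcont : ContinuousOn (fun x => |v' x| * (1 / Real.sqrt (G (v x))))
          {x | x ∈ Ioo t τ ∧ v' x ≠ 0} := by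
        have h1 : ContinuousOn v' {x | x ∈ Ioo t τ ∧ v' x ≠ 0} := hv'_cont.mono hsubαω
        have h2 : ContinuousOn v {x | x ∈ Ioo t τ ∧ v' x ≠ 0} :=
          hv_cont.mono (fun x hx => Ioo_subset_Icc_self (hsubαω hx))
        refine (h1.abs).mul (hqcont.comp h2 ?_)
        intro x hx
        exact ⟨hpos x (hst.le.trans hx.1.1.le) (hx.1.2.trans hτb),
          (propG x (ht₁s₀.trans (hst.trans hx.1.1)) ((hx.1.2.trans hτb).trans_le hb₂c)).1⟩
      have hqE_int : IntegrableOn (fun x => |v' x| * (1 / Real.sqrt (G (v x))))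
          {x | x ∈ Ioo t τ ∧ v' x ≠ 0} volume := by
        refine Integrable.mono' (g := fun _ => Real.sqrt 2)
          (integrableOn_const hEfin.ne) (hEcont.aestronglyMeasurable hEmeas) ?_
        filter_upwards [ae_restrict_mem hEmeas] with x hx
        have h1 := hbound x (hst.trans hx.1.1) (hx.1.2.trans hτb)
        have h2 : 0 ≤ |v' x| * (1 / Real.sqrt (G (v x))) :=
          mul_nonneg (abs_nonneg _) (hqnn _)
        rw [Real.norm_eq_abs, abs_of_nonneg h2]
        exact h1
      refine ⟨hviff.2 hqE_int, ?_⟩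
      rw [hveq]
      calc ∫ x in {x | x ∈ Ioo t τ ∧ v' x ≠ 0}, |v' x| * (1 / Real.sqrt (G (v x)))
          ≤ ∫ _ in {x | x ∈ Ioo t τ ∧ v' x ≠ 0}, Real.sqrt 2 ∂volume := by
            refine setIntegral_mono_on hqE_int (integrableOn_const hEfin.ne) hEmeas ?_
            intro x hx
            exact hbound x (hst.trans hx.1.1) (hx.1.2.trans hτb)
        _ = (volume {x | x ∈ Ioo t τ ∧ v' x ≠ 0}).toReal * Real.sqrt 2 := by
            rw [setIntegral_const, smul_eq_mul, measureReal_def]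
        _ ≤ Real.sqrt 2 * (ω - α) := by
            have h1 : volume {x | x ∈ Ioo t τ ∧ v' x ≠ 0} ≤ volume (Ioo t τ) :=
              measure_mono hEsub
            have h2 : (volume {x | x ∈ Ioo t τ ∧ v' x ≠ 0}).toReal ≤ τ - t := by
              have h3 := ENNReal.toReal_mono
                (by rw [Real.volume_Ioo]; exact ENNReal.ofReal_ne_top) h1
              rwa [Real.volume_Ioo, ENNReal.toReal_ofReal (by linarith)] at h3
            have h4 : τ - t ≤ ω - α := by
              have h5 : τ ≤ ω := (hτb.trans_le hb₂ω).le
              have h6 : α ≤ t := (hαs₀.trans hst).le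
              linarith
            nlinarith [Real.sqrt_nonneg 2,
              ENNReal.toReal_nonneg (a := volume {x | x ∈ Ioo t τ ∧ v' x ≠ 0})]
    have hIoo_a : ∀ a, 0 < a → a < v t →
        IntegrableOn (fun u => 1 / Real.sqrt (G u)) (Ioo a (v t)) volume ∧
        ∫ u in Ioo a (v t), 1 / Real.sqrt (G u) ≤ Real.sqrt 2 * (ω - α) := by
      intro a ha hav
      have hev : ∀ᶠ τ in 𝓝[<] b₂, v τ < a := hvtb₂.eventually (eventually_lt_nhds ha)
      have hmemIoo : ∀ᶠ τ in 𝓝[<] b₂, τ ∈ Ioo t b₂ :=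
        Filter.eventually_of_mem
          (Ioo_mem_nhdsLT_of_mem (⟨htb, le_refl b₂⟩ : b₂ ∈ Ioc t b₂)) (fun x hx => hx)
      obtain ⟨τ, hτa, hτmem⟩ := (hev.and hmemIoo).exists
      obtain ⟨hint, hval⟩ := hτbound τ hτmem.1 hτmem.2
      have hsub2 : Ioo a (v t) ⊆ Ioo (v τ) (v t) := Ioo_subset_Ioo_left hτa.le
      refine ⟨hint.mono_set hsub2, le_trans ?_ hval⟩
      refine setIntegral_mono_set hint ?_ hsub2.eventuallyLE
      filter_upwards with u
      exact hqnn u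
    have hIoo0 : IntegrableOn (fun u => 1 / Real.sqrt (G u)) (Ioo 0 (v t)) volume := by
      set μ₀ := volume.restrict (Ioo (0:ℝ) (v t)) with hμ₀
      set F : ℝ → ENNReal := fun u => ENNReal.ofReal (1 / Real.sqrt (G u)) with hF
      set ν := μ₀.withDensity F with hν
      set aseq : ℕ → ℝ := fun n => v t / (n + 2) with haseq
      have haseq_pos : ∀ n : ℕ, 0 < aseq n := fun n => div_pos hvtpos (by positivity)
      have haseq_lt : ∀ n : ℕ, aseq n < v t := by
        intro n
        rw [haseq]
        simp only
        rw [div_lt_iff₀ (by positivity)]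
        nlinarith [hvtpos, (Nat.cast_nonneg n : (0:ℝ) ≤ n)]
      have hmono2 : Monotone (fun n : ℕ => Ioo (aseq n) (v t)) := by
        intro m n hmn
        apply Ioo_subset_Ioo_left
        rw [haseq]
        simp only
        gcongr
      have hunion : ⋃ n, Ioo (aseq n) (v t) = Ioo 0 (v t) := by
        apply Subset.antisymm
        · exact iUnion_subset (fun n => Ioo_subset_Ioo_left (haseq_pos n).le)
        · intro u hu
          obtain ⟨n, hn⟩ := exists_nat_gt (v t / u)
          refine mem_iUnion.2 ⟨n, ?_, hu.2⟩
          rw [haseq]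
          simp only
          rw [div_lt_iff₀ (by positivity)]
          have h1 : v t / u < (n:ℝ) + 2 := by linarith
          rw [div_lt_iff₀ hu.1] at h1
          nlinarith [hu.1]
      have hbnd : ∀ n : ℕ, ν (Ioo (aseq n) (v t)) ≤ ENNReal.ofReal (Real.sqrt 2 * (ω - α)) := by
        intro n
        obtain ⟨hint, hval⟩ := hIoo_a (aseq n) (haseq_pos n) (haseq_lt n)
        rw [hν, withDensity_apply F measurableSet_Ioo, hμ₀,
          Measure.restrict_restrict measurableSet_Ioo]
        have hss : Ioo (aseq n) (v t) ∩ Ioo 0 (v t) = Ioo (aseq n) (v t) := by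
          rw [inter_eq_left]
          exact Ioo_subset_Ioo_left (haseq_pos n).le
        rw [hss, hF, ← ofReal_integral_eq_lintegral_ofReal hint
          (Filter.Eventually.of_forall (fun u => hqnn u))]
        exact ENNReal.ofReal_le_ofReal hval
      have hν0 : ν (Ioo 0 (v t)) ≤ ENNReal.ofReal (Real.sqrt 2 * (ω - α)) := by
        rw [← hunion, hmono2.measure_iUnion]
        exact iSup_le hbnd
      have hmeas0 : AEStronglyMeasurable (fun u => 1 / Real.sqrt (G u)) μ₀ :=
        (hqcont.mono (fun u hu => ⟨hu.1, hu.2.le.trans hvtε⟩)).aestronglyMeasurable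
          measurableSet_Ioo
      refine ⟨hmeas0, ?_⟩
      rw [hasFiniteIntegral_def]
      have hlint : (∫⁻ u, ‖1 / Real.sqrt (G u)‖₊ ∂μ₀) = ν (Ioo 0 (v t)) := by
        rw [hν, withDensity_apply F measurableSet_Ioo, hμ₀,
          Measure.restrict_restrict measurableSet_Ioo, inter_self]
        apply lintegral_congr
        intro u
        simp only [hF]
        exact Real.enorm_eq_ofReal (hqnn u)
      calc (∫⁻ u, ‖1 / Real.sqrt (G u)‖₊ ∂μ₀) = ν (Ioo 0 (v t)) := hlint
        _ ≤ ENNReal.ofReal (Real.sqrt 2 * (ω - α)) := hν0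
        _ < ⊤ := ENNReal.ofReal_lt_top
    have hIcc : IntegrableOn (fun u => 1 / Real.sqrt (G u)) (Icc (v t) ε) volume :=
      (hqcont.mono (fun u hu => ⟨hvtpos.trans_le hu.1, hu.2⟩)).integrableOn_compact
        isCompact_Icc
    refine hGni ?_
    refine (hIoo0.union hIcc).mono_set ?_
    intro u hu
    rcases lt_or_ge u (v t) with h | h
    · exact Set.mem_union_left _ ⟨hu.1, h⟩
    · exact Set.mem_union_right _ ⟨h, hu.2⟩
end

section
/- Boundary regularity at the left endpoint under an integral decay condition, strong form of Theorem 3.2(j). Let f : (a,b) × ℝ → ℝ and let u ∈ W^{1,1}(a,b) be continuously differentiable on (a,b) with u' locally absolutely continuous on (a,b), satisfying −(u'(x)/√(1+u'(x)²))' = f(x, u(x)) for almost every x ∈ (a,b), with f(x, u(x)) ≥ 0 for almost every x ∈ (a,b). Assume there exist δ > 0 and μ ∈ L¹(a, a+δ) such that f(x, u(x)) ≤ μ(x) for almost every x ∈ (a, a+δ), M(x) := ∫ₐ^x μ(t) dt > 0 for all x ∈ (a, a+δ], and ∫ₐ^{a+δ} dx/√(M(x)) = +∞. Then the limit u'(a⁺)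 = lim_{x→a⁺} u'(x) is finite, and consequently u'' is integrable on (a, c) for every c ∈ (a,b). -/
open Set Filter MeasureTheory Topology


noncomputable def psiBV (s : ℝ) : ℝ := s / Real.sqrt (1 + s ^ 2)

lemma sqrtBV_pos (s : ℝ) : 0 < Real.sqrt (1 + s ^ 2) :=
  Real.sqrt_pos.2 (by positivity)

lemma sqrtBV_ge_one (s : ℝ) : 1 ≤ Real.sqrt (1 + s ^ 2) := by
  calc (1:ℝ) = Real.sqrt 1 := by rw [Real.sqrt_one]
  _ ≤ Real.sqrt (1 + s ^ 2) := Real.sqrt_le_sqrt (by nlinarith)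

lemma sqrtBV_sq (s : ℝ) : Real.sqrt (1 + s ^ 2) ^ 2 = 1 + s ^ 2 :=
  Real.sq_sqrt (by positivity)

lemma psiBV_hasDerivAt (s : ℝ) :
    HasDerivAt psiBV (1 / Real.sqrt (1 + s ^ 2) ^ 3) s := by
  have h1 : HasDerivAt (fun t : ℝ => 1 + t ^ 2) (2 * s) s := by
    simpa using ((hasDerivAt_pow 2 s).const_add 1)
  have h2 : HasDerivAt (fun t : ℝ => Real.sqrt (1 + t ^ 2))
      (1 / (2 * Real.sqrt (1 + s ^ 2)) * (2 * s)) s :=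
    (Real.hasDerivAt_sqrt (by positivity)).comp s h1
  have h3 : HasDerivAt (fun t : ℝ => t / Real.sqrt (1 + t ^ 2))
      ((1 * Real.sqrt (1 + s ^ 2) - s * (1 / (2 * Real.sqrt (1 + s ^ 2)) * (2 * s)))
        / Real.sqrt (1 + s ^ 2) ^ 2) s :=
    (hasDerivAt_id s).div h2 (sqrtBV_pos s).ne'
  convert h3 using 1
  case e'_8 => rfl
  have hr := sqrtBV_pos s
  have hsq := sqrtBV_sq s
  have hnum : 1 * Real.sqrt (1 + s ^ 2) - s * (1 / (2 * Real.sqrt (1 + s ^ 2)) * (2 * s))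
      = 1 / Real.sqrt (1 + s ^ 2) := by
    rw [one_mul, eq_div_iff hr.ne']
    have hk : s * (1 / (2 * Real.sqrt (1 + s ^ 2)) * (2 * s)) * Real.sqrt (1 + s ^ 2)
        = s ^ 2 * (Real.sqrt (1 + s ^ 2) * (Real.sqrt (1 + s ^ 2))⁻¹) := by ring
    rw [mul_inv_cancel₀ hr.ne', mul_one] at hk
    linear_combination hsq - hk
  rw [hnum, div_div]
  congr 1
  ring

lemma psiBV_deriv_pos (s : ℝ) : 0 < 1 / Real.sqrt (1 + s ^ 2) ^ 3 := by
  have := sqrtBV_pos s; positivity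

lemma psiBV_deriv_le_one (s : ℝ) : 1 / Real.sqrt (1 + s ^ 2) ^ 3 ≤ 1 := by
  have h := sqrtBV_ge_one s
  have : (1:ℝ) ≤ Real.sqrt (1 + s ^ 2) ^ 3 := one_le_pow₀ h
  rw [div_le_one (by linarith)]; linarith

lemma psiBV_mono : Monotone psiBV := by
  have : ∀ s : ℝ, 0 ≤ deriv psiBV s := by
    intro s
    rw [(psiBV_hasDerivAt s).deriv]
    exact (psiBV_deriv_pos s).le
  exact monotone_of_deriv_nonneg (fun s => (psiBV_hasDerivAt s).differentiableAt) this

lemma psiBV_le_one (s : ℝ) : psiBV s ≤ 1 := by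
  rw [psiBV, div_le_one (sqrtBV_pos s)]
  nlinarith [sqrtBV_sq s, sqrtBV_pos s, sq_nonneg (Real.sqrt (1 + s ^ 2) - s)]

lemma psiBV_lower {s : ℝ} (hs : 1 ≤ s) : 1 - 1 / s ^ 2 ≤ psiBV s := by
  set r := Real.sqrt (1 + s ^ 2) with hrdef
  have hr : 0 < r := sqrtBV_pos s
  have hsq : r ^ 2 = 1 + s ^ 2 := sqrtBV_sq s
  have h1 : ((s ^ 2 - 1) * r) ^ 2 = (s ^ 2 - 1) ^ 2 * (1 + s ^ 2) := by
    rw [mul_pow, hsq]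
  have h2 : ((s ^ 2 - 1) * r) ^ 2 ≤ (s ^ 3) ^ 2 := by rw [h1]; nlinarith
  have h3 : (s ^ 2 - 1) * r ≤ s ^ 3 := by
    have hnn : 0 ≤ (s ^ 2 - 1) * r := mul_nonneg (by nlinarith) hr.le
    have := Real.sqrt_le_sqrt h2
    rwa [Real.sqrt_sq hnn, Real.sqrt_sq (by positivity)] at this
  rw [psiBV, le_div_iff₀ hr]
  have hs2 : (0:ℝ) < s ^ 2 := by positivity
  have : (1 - 1 / s ^ 2) * r = ((s ^ 2 - 1) * r) / s ^ 2 := by field_simp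
  rw [this, div_le_iff₀ hs2]
  calc (s ^ 2 - 1) * r ≤ s ^ 3 := h3
  _ = s * s ^ 2 := by ring

lemma psiBV_key_algebra {s m : ℝ} (hs : 1 ≤ s) (hm : 0 < m)
    (h : 1 - psiBV s ≤ m) : 1 / Real.sqrt m ≤ Real.sqrt 6 * s := by
  set r := Real.sqrt (1 + s ^ 2) with hrdef
  have hr : 0 < r := sqrtBV_pos s
  have hsq : r ^ 2 = 1 + s ^ 2 := sqrtBV_sq s
  have hrle : r ≤ 2 * s := by nlinarith
  have h2 : 1 - s / r ≤ m := h
  have h1' : r - s ≤ m * r := by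
    have he : r - s = (1 - s / r) * r := by field_simp
    rw [he]
    exact mul_le_mul_of_nonneg_right h2 hr.le
  have hrs0 : (0:ℝ) < r + s := by linarith
  have hrs : 1 ≤ m * r * (r + s) := by
    have hmm := mul_le_mul_of_nonneg_right h1' hrs0.le
    have heq : (r - s) * (r + s) = 1 := by nlinarith
    nlinarith
  have h6 : 1 ≤ m * (6 * s ^ 2) := by
    nlinarith [mul_nonneg (mul_nonneg hm.le (by linarith : (0:ℝ) ≤ 2 * s - r))
        (by linarith : (0:ℝ) ≤ r + s),
      mul_nonneg (mul_nonneg hm.le (by linarith : (0:ℝ) ≤ s)) (by linarith : (0:ℝ) ≤ 2 * s - r)]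
  have hsm : Real.sqrt m ^ 2 = m := Real.sq_sqrt hm.le
  have hs6 : Real.sqrt 6 ^ 2 = 6 := Real.sq_sqrt (by norm_num)
  have hmpos : 0 < Real.sqrt m := Real.sqrt_pos.2 hm
  have h6pos : (0:ℝ) < Real.sqrt 6 := Real.sqrt_pos.2 (by norm_num)
  rw [div_le_iff₀ hmpos]
  have h7 : (1:ℝ) ≤ (Real.sqrt 6 * s * Real.sqrt m) ^ 2 := by
    rw [mul_pow, mul_pow, hs6, hsm]; nlinarith
  nlinarith [mul_pos (mul_pos h6pos (by linarith : (0:ℝ) < s)) hmpos]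

section FtcAux
open intervalIntegral


lemma contBV (v : ℝ → ℝ) (hv : Continuous v) :
    Continuous (fun t => 1 / Real.sqrt (1 + v t ^ 2) ^ 3) := by
  apply Continuous.div continuous_const
  · exact (Real.continuous_sqrt.comp (by continuity)).pow 3
  · intro t
    have := sqrtBV_pos (v t); positivity

lemma psiBV_cont : Continuous psiBV :=
  continuous_iff_continuousAt.2 fun z => (psiBV_hasDerivAt z).continuousAt

lemma abs_psiBV_deriv_mul_le (z c : ℝ) :
    ‖(1 / Real.sqrt (1 + z ^ 2) ^ 3) * c‖ ≤ ‖c‖ := by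
  rw [norm_mul]
  have h1 : ‖1 / Real.sqrt (1 + z ^ 2) ^ 3‖ ≤ 1 := by
    rw [Real.norm_eq_abs, abs_of_pos (psiBV_deriv_pos z)]
    exact psiBV_deriv_le_one z
  calc ‖1 / Real.sqrt (1 + z ^ 2) ^ 3‖ * ‖c‖ ≤ 1 * ‖c‖ :=
        mul_le_mul_of_nonneg_right h1 (norm_nonneg c)
  _ = ‖c‖ := one_mul _

lemma ftc_psi_comp (x y : ℝ) (hxy : x ≤ y) (w g : ℝ → ℝ)
    (hg : IntegrableOn g (Icc x y))
    (hw : ∀ t ∈ Icc x y, w t = w x + ∫ s in x..t, g s) :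
    psiBV (w y) - psiBV (w x)
      = ∫ t in Ioc x y, (1 / Real.sqrt (1 + w t ^ 2) ^ 3) * g t := by
  set G : ℝ → ℝ := (Icc x y).indicator g with hGdef
  have hG : Integrable G := hg.integrable_indicator measurableSet_Icc
  have happrox : ∀ n : ℕ, ∃ h : ℝ → ℝ, HasCompactSupport h ∧
      (∫ t, ‖G t - h t‖) ≤ 1/((n:ℝ)+1) ∧ Continuous h ∧ Integrable h :=
    fun n => hG.exists_hasCompactSupport_integral_sub_le (by positivity)
  choose gn hgn_supp hgn_close hgn_cont hgn_int using happrox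
  set v : ℕ → ℝ → ℝ := fun n t => w x + ∫ s in x..t, gn n s with hvdef
  have hvd : ∀ n t, HasDerivAt (v n) (gn n t) t := fun n t =>
    (((hgn_cont n).integral_hasStrictDerivAt x t).hasDerivAt).const_add (w x)
  have hvcont : ∀ n, Continuous (v n) :=
    fun n => continuous_iff_continuousAt.2 fun t => (hvd n t).continuousAt
  have hψd : ∀ n t, HasDerivAt (fun t => psiBV (v n t))
      ((1 / Real.sqrt (1 + (v n t) ^ 2) ^ 3) * gn n t) t :=
    fun n t => (psiBV_hasDerivAt (v n t)).comp t (hvd n t)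
  have hcont_integrand : ∀ n,
      Continuous (fun t => (1 / Real.sqrt (1 + (v n t) ^ 2) ^ 3) * gn n t) :=
    fun n => (contBV _ (hvcont n)).mul (hgn_cont n)
  have hftc : ∀ n, ∫ t in x..y, (1 / Real.sqrt (1 + (v n t) ^ 2) ^ 3) * gn n t
      = psiBV (v n y) - psiBV (v n x) := fun n =>
    integral_eq_sub_of_hasDerivAt (fun t _ => hψd n t)
      ((hcont_integrand n).intervalIntegrable x y)
  have hvx : ∀ n, v n x = w x := by intro n; simp [hvdef]
  -- closeness of v n to w on Icc x y
  have hIg : ∀ t ∈ Icc x y, IntervalIntegrable g volume x t := by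
    intro t ht
    exact (intervalIntegrable_iff_integrableOn_Ioc_of_le ht.1).2
      ((hg.mono_set (Icc_subset_Icc_right ht.2)).mono_set Ioc_subset_Icc_self)
  have hGsub : ∀ n, Integrable (fun s => G s - gn n s) := fun n => hG.sub (hgn_int n)
  have hnormint : ∀ n, Integrable (fun s => ‖G s - gn n s‖) := fun n => (hGsub n).norm
  have hsetle : ∀ n, ∀ t ∈ Icc x y,
      (∫ s in Ioc x t, ‖G s - gn n s‖) ≤ 1/((n:ℝ)+1) := by
    intro n t _
    refine le_trans ?_ (hgn_close n)
    exact setIntegral_le_integral (hnormint n)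
      (Eventually.of_forall fun s => norm_nonneg _)
  have hclose : ∀ n, ∀ t ∈ Icc x y, |v n t - w t| ≤ 1/((n:ℝ)+1) := by
    intro n t ht
    have hIgn : IntervalIntegrable (gn n) volume x t := (hgn_cont n).intervalIntegrable x t
    have hvt : v n t - w t = ∫ s in x..t, (gn n s - g s) := by
      rw [hw t ht]
      show (w x + ∫ s in x..t, gn n s) - _ = _
      rw [intervalIntegral.integral_sub hIgn (hIg t ht)]; ring
    rw [hvt]
    have h1 : |∫ s in x..t, (gn n s - g s)| ≤ ∫ s in x..t, |gn n s - g s| := by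
      have := intervalIntegral.norm_integral_le_integral_norm
        (f := fun s => gn n s - g s) (μ := volume) (a := x) (b := t) ht.1
      simpa [Real.norm_eq_abs] using this
    refine h1.trans ?_
    rw [intervalIntegral.integral_of_le ht.1]
    have h3 : EqOn (fun s => |gn n s - g s|) (fun s => ‖G s - gn n s‖) (Ioc x t) := by
      intro s hs
      have hmem : s ∈ Icc x y := Icc_subset_Icc_right ht.2 (Ioc_subset_Icc_self hs)
      simp only [hGdef, indicator_of_mem hmem, Real.norm_eq_abs, abs_sub_comm]
    rw [setIntegral_congr_fun measurableSet_Ioc h3]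
    exact hsetle n t ht
  have hten : Tendsto (fun n : ℕ => 1/((n:ℝ)+1)) atTop (𝓝 0) :=
    tendsto_one_div_add_atTop_nhds_zero_nat
  have hvty : ∀ t ∈ Icc x y, Tendsto (fun n => v n t) atTop (𝓝 (w t)) := by
    intro t ht
    have h0 : Tendsto (fun n => v n t - w t) atTop (𝓝 0) :=
      squeeze_zero_norm (fun n => by
        simpa [Real.norm_eq_abs] using hclose n t ht) hten
    have := h0.add (tendsto_const_nhds (x := w t))
    simpa using this
  -- LHS limit
  have hL : Tendsto (fun n => psiBV (v n y) - psiBV (v n x)) atTop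
      (𝓝 (psiBV (w y) - psiBV (w x))) := by
    simp only [hvx]
    exact ((psiBV_cont.tendsto _).comp (hvty y ⟨hxy, le_rfl⟩)).sub tendsto_const_nhds
  -- dominated convergence for ∫ ψ'(v n) g
  have hgIoc : IntegrableOn g (Ioc x y) := hg.mono_set Ioc_subset_Icc_self
  have hB : Tendsto (fun n => ∫ t in Ioc x y, (1 / Real.sqrt (1 + (v n t) ^ 2) ^ 3) * g t)
      atTop (𝓝 (∫ t in Ioc x y, (1 / Real.sqrt (1 + w t ^ 2) ^ 3) * g t)) := by
    refine tendsto_integral_of_dominated_convergence (fun t => ‖g t‖)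
      (fun n => ((contBV _ (hvcont n)).aestronglyMeasurable).mul hgIoc.1) hgIoc.norm
      (fun n => Eventually.of_forall fun t => abs_psiBV_deriv_mul_le _ _) ?_
    filter_upwards [ae_restrict_mem measurableSet_Ioc] with t ht
    have h1 : Tendsto (fun n => v n t) atTop (𝓝 (w t)) := hvty t (Ioc_subset_Icc_self ht)
    exact (((contBV id continuous_id).tendsto (w t)).comp h1).mul tendsto_const_nhds
  -- difference bound
  have hdiff : ∀ n, ‖(∫ t in x..y, (1 / Real.sqrt (1 + (v n t) ^ 2) ^ 3) * gn n t)
      - ∫ t in Ioc x y, (1 / Real.sqrt (1 + (v n t) ^ 2) ^ 3) * g t‖ ≤ 1/((n:ℝ)+1) := by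
    intro n
    have hgnIoc : IntegrableOn (gn n) (Ioc x y) := (hgn_int n).integrableOn
    have hint1 : IntegrableOn (fun t => (1 / Real.sqrt (1 + (v n t) ^ 2) ^ 3) * gn n t)
        (Ioc x y) := ((hcont_integrand n).integrable_of_hasCompactSupport
          ((hgn_supp n).mul_left)).integrableOn
    have hint2 : IntegrableOn (fun t => (1 / Real.sqrt (1 + (v n t) ^ 2) ^ 3) * g t)
        (Ioc x y) := by
      refine Integrable.mono' hgIoc.norm
        (((contBV _ (hvcont n)).aestronglyMeasurable).mul hgIoc.1)
        (Eventually.of_forall fun t => abs_psiBV_deriv_mul_le _ _)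
    rw [intervalIntegral.integral_of_le hxy, ← integral_sub hint1 hint2]
    have h1 : ∀ t, ((1 / Real.sqrt (1 + (v n t) ^ 2) ^ 3) * gn n t)
        - ((1 / Real.sqrt (1 + (v n t) ^ 2) ^ 3) * g t)
        = (1 / Real.sqrt (1 + (v n t) ^ 2) ^ 3) * (gn n t - g t) := fun t => by ring
    simp only [h1]
    refine le_trans (norm_integral_le_integral_norm _) ?_
    have h2 : ∀ t ∈ Ioc x y, ‖(1 / Real.sqrt (1 + (v n t) ^ 2) ^ 3) * (gn n t - g t)‖
        ≤ ‖G t - gn n t‖ := by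
      intro t ht
      refine (abs_psiBV_deriv_mul_le _ _).trans_eq ?_
      have hmem : t ∈ Icc x y := Ioc_subset_Icc_self ht
      simp only [hGdef, indicator_of_mem hmem, Real.norm_eq_abs, abs_sub_comm]
    have hintL : IntegrableOn
        (fun t => (1 / Real.sqrt (1 + (v n t) ^ 2) ^ 3) * (gn n t - g t)) (Ioc x y) := by
      have h1' : (fun t => ((1 / Real.sqrt (1 + (v n t) ^ 2) ^ 3) * gn n t)
          - ((1 / Real.sqrt (1 + (v n t) ^ 2) ^ 3) * g t))
          = (fun t => (1 / Real.sqrt (1 + (v n t) ^ 2) ^ 3) * (gn n t - g t)) := funext h1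
      have := hint1.sub hint2
      exact this.congr (Eventually.of_forall fun t => h1 t)
    refine le_trans (setIntegral_mono_on hintL.norm ((hnormint n).integrableOn)
      measurableSet_Ioc h2) ?_
    exact hsetle n y ⟨hxy, le_rfl⟩
  -- assemble
  have hA : Tendsto (fun n => ∫ t in x..y, (1 / Real.sqrt (1 + (v n t) ^ 2) ^ 3) * gn n t)
      atTop (𝓝 (∫ t in Ioc x y, (1 / Real.sqrt (1 + w t ^ 2) ^ 3) * g t)) := by
    have h0 : Tendsto (fun n => (∫ t in x..y, (1 / Real.sqrt (1 + (v n t) ^ 2) ^ 3) * gn n t)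
        - ∫ t in Ioc x y, (1 / Real.sqrt (1 + (v n t) ^ 2) ^ 3) * g t) atTop (𝓝 0) :=
      squeeze_zero_norm hdiff hten
    have := h0.add hB
    simpa using this
  have hA' : Tendsto (fun n => ∫ t in x..y, (1 / Real.sqrt (1 + (v n t) ^ 2) ^ 3) * gn n t)
      atTop (𝓝 (psiBV (w y) - psiBV (w x))) := by
    simp only [hftc]
    exact hL
  exact tendsto_nhds_unique hA' hA



lemma rpow32 (s : ℝ) : (1 + s ^ 2) ^ ((3:ℝ)/2) = Real.sqrt (1 + s ^ 2) ^ 3 := by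
  rw [Real.sqrt_eq_rpow, ← Real.rpow_natCast ((1 + s ^ 2) ^ ((1:ℝ)/2)) 3,
    ← Real.rpow_mul (by positivity)]
  norm_num


end FtcAux

open intervalIntegral in
/-- **Boundary regularity at the left endpoint under an integral decay condition
(Theorem 3.2(j), strong form).** If `u ∈ W^{1,1}(a,b)` is C¹ on `(a,b)` with `u'` locally
absolutely continuous, solves `-(u'/√(1+u'²))' = f(x,u) ≥ 0` a.e. (equivalently
`-u'' = f(x,u)(1+u'²)^{3/2}` a.e.), and there are `δ > 0` and `μ ∈ L¹(a,a+δ)` with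
`f(x,u(x)) ≤ μ(x)` a.e. on `(a,a+δ)`, `M(x) = ∫_a^x μ > 0` on `(a,a+δ]`, and
`∫_a^{a+δ} dx/√(M(x)) = +∞`, then `u'(a⁺)` is finite and `u''` is integrable on `(a,c)`
for every `c ∈ (a,b)`. -/
theorem boundary_regularity_left_nonneg_curvature
    (a b : ℝ) (hab : a < b) (f : ℝ → ℝ → ℝ) (u u' u'' : ℝ → ℝ)
    -- u ∈ W^{1,1}(a,b)
    (hu_cont : ContinuousOn u (Icc a b))
    (hu'_int : IntegrableOn u' (Ioo a b))
    (hu_ftc : ∀ x ∈ Icc a b, u x = u a + ∫ t in a..x, u' t)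
    -- u is C¹ on (a,b) with u' locally absolutely continuous, a.e. derivative u''
    (hu_deriv : ∀ x ∈ Ioo a b, HasDerivAt u (u' x) x)
    (hu'_cont : ContinuousOn u' (Ioo a b))
    (hu'_locAC : ∀ c d : ℝ, a < c → c ≤ d → d < b →
      IntegrableOn u'' (Icc c d) ∧ ∀ x ∈ Icc c d, u' x = u' c + ∫ t in c..x, u'' t)
    -- the prescribed curvature equation a.e. in (a,b)
    (heq : ∀ᵐ x ∂volume, x ∈ Ioo a b →
      -u'' x = f x (u x) * (1 + u' x ^ 2) ^ ((3:ℝ)/2))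
    -- nonnegative curvature
    (hsign : ∀ᵐ x ∂volume, x ∈ Ioo a b → 0 ≤ f x (u x))
    -- integral decay condition at the left endpoint
    (hdecay : ∃ δ > (0:ℝ), a + δ ≤ b ∧ ∃ μ : ℝ → ℝ,
      IntegrableOn μ (Ioo a (a + δ)) ∧
      (∀ᵐ x ∂volume, x ∈ Ioo a (a + δ) → f x (u x) ≤ μ x) ∧
      (∀ x ∈ Ioc a (a + δ), 0 < ∫ t in a..x, μ t) ∧
      ¬ IntegrableOn (fun x => 1 / Real.sqrt (∫ t in a..x, μ t)) (Ioo a (a + δ))) :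
    (∃ L : ℝ, Tendsto u' (𝓝[>] a) (𝓝 L)) ∧
    ∀ c ∈ Ioo a b, IntegrableOn u'' (Ioo a c) := by

  obtain ⟨δ, hδ, hδb, μ, hμ_int, hμ_ge, hM_pos, hM_nonint⟩ := hdecay
  set M : ℝ → ℝ := fun z => ∫ t in a..z, μ t with hMdef
  have hM_pos' : ∀ z ∈ Ioc a (a + δ), 0 < M z := fun z hz => hM_pos z hz
  have hsub : Ioo a (a + δ) ⊆ Ioo a b := fun t ht => ⟨ht.1, lt_of_lt_of_le ht.2 hδb⟩
  -- combined a.e. facts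
  have hae : ∀ᵐ t ∂volume, t ∈ Ioo a b →
      u'' t ≤ 0 ∧ -u'' t = f t (u t) * (1 + u' t ^ 2) ^ ((3:ℝ)/2) ∧ 0 ≤ f t (u t) := by
    filter_upwards [heq, hsign] with t h1 h2 ht
    have hr : 0 ≤ (1 + u' t ^ 2) ^ ((3:ℝ)/2) := Real.rpow_nonneg (by positivity) _
    have h0 : 0 ≤ -u'' t := by rw [h1 ht]; exact mul_nonneg (h2 ht) hr
    exact ⟨by linarith, h1 ht, h2 ht⟩
  have hμ_nonneg : ∀ᵐ t ∂volume, t ∈ Ioo a (a + δ) → 0 ≤ μ t := by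
    filter_upwards [hμ_ge, hsign] with t h1 h2 ht
    exact le_trans (h2 (hsub ht)) (h1 ht)
  -- u' is antitone on (a,b)
  have hanti : AntitoneOn u' (Ioo a b) := by
    intro p hp q hq hpq
    obtain ⟨hint, hrep⟩ := hu'_locAC p q hp.1 hpq hq.2
    have hq' := hrep q ⟨hpq, le_rfl⟩
    have hneg : (∫ t in p..q, u'' t) ≤ 0 := by
      rw [intervalIntegral.integral_of_le hpq]
      refine setIntegral_nonpos_ae measurableSet_Ioc ?_
      filter_upwards [hae] with t h ht
      exact (h ⟨hp.1.trans ht.1, lt_of_le_of_lt ht.2 hq.2⟩).1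
    linarith [hq']
  -- interval integrability of μ from a
  have hμ_ii : ∀ z, a < z → z < a + δ → IntervalIntegrable μ volume a z := by
    intro z hz1 hz2
    refine (intervalIntegrable_iff_integrableOn_Ioc_of_le hz1.le).2 ?_
    exact hμ_int.mono_set (fun t ht => ⟨ht.1, lt_of_le_of_lt ht.2 hz2⟩)
  have hM_nonneg : ∀ z, a < z → z < a + δ → 0 ≤ M z := by
    intro z hz1 hz2
    rw [hMdef]
    simp only
    rw [intervalIntegral.integral_of_le hz1.le]
    refine setIntegral_nonneg_ae measurableSet_Ioc ?_
    filter_upwards [hμ_nonneg] with t h ht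
    exact h ⟨ht.1, lt_of_le_of_lt ht.2 hz2⟩
  have hMmono : ∀ p q, a < p → p ≤ q → q < a + δ → M p ≤ M q := by
    intro p q hp hpq hq
    have h1 : IntervalIntegrable μ volume a p := hμ_ii p hp (lt_of_le_of_lt hpq hq)
    have h2 : IntervalIntegrable μ volume p q := by
      refine (intervalIntegrable_iff_integrableOn_Ioc_of_le hpq).2 ?_
      exact hμ_int.mono_set (fun t ht => ⟨hp.trans ht.1, lt_of_le_of_lt ht.2 hq⟩)
    have hadd := intervalIntegral.integral_add_adjacent_intervals h1 h2
    have h3 : 0 ≤ ∫ t in p..q, μ t := by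
      rw [intervalIntegral.integral_of_le hpq]
      refine setIntegral_nonneg_ae measurableSet_Ioc ?_
      filter_upwards [hμ_nonneg] with t h ht
      exact h ⟨hp.trans ht.1, lt_of_le_of_lt ht.2 hq⟩
    show (∫ t in a..p, μ t) ≤ ∫ t in a..q, μ t
    linarith [hadd]
  -- key inequality
  have hkey : ∀ p q : ℝ, p ∈ Ioo a b → q ∈ Ioo a b → p ≤ q → q < a + δ →
      psiBV (u' p) - psiBV (u' q) ≤ M q := by
    intro p q hp hq hpq hqδ
    obtain ⟨hint, hrep⟩ := hu'_locAC p q hp.1 hpq hq.2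
    have hftc := ftc_psi_comp p q hpq u' u'' hint (fun t ht => hrep t ht)
    have e1 : psiBV (u' p) - psiBV (u' q)
        = ∫ t in Ioc p q, (1 / Real.sqrt (1 + u' t ^ 2) ^ 3) * (-u'' t) := by
      simp only [mul_neg]
      rw [MeasureTheory.integral_neg, ← hftc]; ring
    -- integrand equals f t (u t) a.e. on Ioc p q, hence ≤ μ
    have haeμ : ∀ᵐ t ∂volume.restrict (Ioc p q),
        (1 / Real.sqrt (1 + u' t ^ 2) ^ 3) * (-u'' t) ≤ μ t := by
      rw [ae_restrict_iff' measurableSet_Ioc]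
      filter_upwards [hae, hμ_ge] with t h1 h2 ht
      have htb : t ∈ Ioo a b := ⟨hp.1.trans ht.1, lt_of_le_of_lt ht.2 hq.2⟩
      have htδ : t ∈ Ioo a (a + δ) := ⟨hp.1.trans ht.1, lt_of_le_of_lt ht.2 hqδ⟩
      obtain ⟨-, he, -⟩ := h1 htb
      have hs3 : Real.sqrt (1 + u' t ^ 2) ^ 3 ≠ 0 := by
        have := sqrtBV_pos (u' t); positivity
      rw [he, rpow32]
      calc 1 / Real.sqrt (1 + u' t ^ 2) ^ 3 * (f t (u t) * Real.sqrt (1 + u' t ^ 2) ^ 3)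
          = f t (u t) := by field_simp
      _ ≤ μ t := h2 htδ
    -- integrability of LHS integrand
    have hu''Ioc : IntegrableOn u'' (Ioc p q) := hint.mono_set Ioc_subset_Icc_self
    have hcontOn : ContinuousOn (fun t => 1 / Real.sqrt (1 + u' t ^ 2) ^ 3) (Ioc p q) := by
      refine (contBV id continuous_id).comp_continuousOn ?_
      exact hu'_cont.mono (fun t ht => ⟨hp.1.trans ht.1, lt_of_le_of_lt ht.2 hq.2⟩)
    have hLint : IntegrableOn (fun t => (1 / Real.sqrt (1 + u' t ^ 2) ^ 3) * (-u'' t))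
        (Ioc p q) := by
      refine Integrable.mono' hu''Ioc.norm
        ((hcontOn.aestronglyMeasurable measurableSet_Ioc).mul hu''Ioc.1.neg)
        (Eventually.of_forall fun t => ?_)
      refine (abs_psiBV_deriv_mul_le _ _).trans_eq ?_
      simp
    have hμIoc : IntegrableOn μ (Ioc p q) :=
      hμ_int.mono_set (fun t ht => ⟨hp.1.trans ht.1, lt_of_le_of_lt ht.2 hqδ⟩)
    have hle := integral_mono_ae hLint hμIoc haeμ
    -- ∫_{Ioc p q} μ ≤ M q
    have h1 : IntervalIntegrable μ volume a p := hμ_ii p hp.1 (lt_of_le_of_lt hpq hqδ)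
    have h2 : IntervalIntegrable μ volume p q := by
      refine (intervalIntegrable_iff_integrableOn_Ioc_of_le hpq).2 hμIoc
    have hadd := intervalIntegral.integral_add_adjacent_intervals h1 h2
    have h0p : 0 ≤ M p := hM_nonneg p hp.1 (lt_of_le_of_lt hpq hqδ)
    have e2 : ∫ t in Ioc p q, μ t = (∫ t in p..q, μ t) :=
      (intervalIntegral.integral_of_le hpq).symm
    rw [e1]
    refine hle.trans ?_
    rw [e2]
    show (∫ t in p..q, μ t) ≤ ∫ t in a..q, μ t
    have h0p' : (0:ℝ) ≤ ∫ t in a..p, μ t := h0p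
    linarith [hadd]
  -- continuity of M inside (a, a+δ)
  have hMcont : ∀ z ∈ Ioo a (a + δ), ContinuousAt M z := by
    intro z hz
    have hpz : (a + z)/2 < z := by linarith [hz.1]
    have hzq : z < (z + (a + δ))/2 := by linarith [hz.2]
    have hap : a < (a + z)/2 := by linarith [hz.1]
    have hqδ' : (z + (a + δ))/2 < a + δ := by linarith [hz.2]
    have h1 : ContinuousWithinAt M (Icc ((a + z)/2) ((z + (a + δ))/2)) z := by
      refine intervalIntegral.continuousWithinAt_primitive (measure_singleton z) ?_
      rw [min_eq_left (by linarith : a ≤ (a + z)/2), max_eq_right (by linarith : a ≤ (z + (a + δ))/2)]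
      exact hμ_ii _ (by linarith) (by linarith)
    exact h1.continuousAt (Icc_mem_nhds hpz hzq)
  have hMcontOn : ∀ s : Set ℝ, s ⊆ Ioo a (a + δ) →
      ContinuousOn (fun z => 1 / Real.sqrt (M z)) s := by
    intro s hs z hz
    have hz' := hs hz
    have hMz : 0 < M z := hM_pos' z ⟨hz'.1, hz'.2.le⟩
    have h1 : ContinuousAt (fun z => Real.sqrt (M z)) z :=
      Real.continuous_sqrt.continuousAt.comp (hMcont z hz')
    exact (continuousAt_const.div h1 (Real.sqrt_pos.2 hMz).ne').continuousWithinAt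
  -- boundedness above of u' near a
  have hIoo : (Ioo a b).Nonempty := nonempty_Ioo.2 hab
  have hbdd : BddAbove (u' '' Ioo a b) := by
    by_contra hbdd
    have htop : Tendsto u' (𝓝[>] a) atTop := by
      rw [tendsto_atTop]
      intro C
      obtain ⟨y, ⟨x₀, hx₀, rfl⟩, hCy⟩ := not_bddAbove_iff.1 hbdd C
      filter_upwards [Ioo_mem_nhdsGT_of_mem (left_mem_Ico.2 hx₀.1)] with t ht
      exact le_of_lt (lt_of_lt_of_le hCy (hanti ⟨ht.1, ht.2.trans hx₀.2⟩ hx₀ ht.2.le))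
    have hηev : ∀ᶠ t in 𝓝[>] a, 1 ≤ u' t := htop.eventually (eventually_ge_atTop 1)
    have hmemev : ∀ᶠ t in 𝓝[>] a, t ∈ Ioo a (a + δ) :=
      Ioo_mem_nhdsGT_of_mem (left_mem_Ico.2 (by linarith))
    obtain ⟨η, hη1, hηmem⟩ := (hηev.and hmemev).exists
    have hu'1 : ∀ t ∈ Ioc a η, 1 ≤ u' t := fun t ht =>
      le_trans hη1 (hanti (hsub ⟨ht.1, lt_of_le_of_lt ht.2 hηmem.2⟩) (hsub hηmem) ht.2)
    have hlim1 : ∀ q ∈ Ioc a η, 1 - psiBV (u' q) ≤ M q := by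
      intro q hq
      have hqmem : q ∈ Ioo a (a + δ) := ⟨hq.1, lt_of_le_of_lt hq.2 hηmem.2⟩
      refine le_of_forall_pos_le_add ?_
      intro ε hε
      have hsε : 0 < Real.sqrt ε := Real.sqrt_pos.2 hε
      set s : ℝ := 1 + 1 / Real.sqrt ε with hsdef
      have hs1 : 1 ≤ s := by
        have h' : 0 < 1 / Real.sqrt ε := by positivity
        rw [hsdef]; linarith
      have hψs : 1 - ε ≤ psiBV s := by
        have h1 := psiBV_lower hs1
        have hsq0 : (1 / Real.sqrt ε) ^ 2 = 1 / ε := by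
          rw [one_div, inv_pow, Real.sq_sqrt hε.le, one_div]
        have hsq : 1 / ε ≤ s ^ 2 := by
          rw [← hsq0]
          refine pow_le_pow_left₀ (by positivity) (by linarith) 2
        have hsq' : 1 ≤ ε * s ^ 2 := by
          have := mul_le_mul_of_nonneg_left hsq hε.le
          rwa [mul_one_div, div_self hε.ne'] at this
        have h2 : 1 / s ^ 2 ≤ ε := by
          rw [div_le_iff₀ (by positivity)]
          linarith [hsq']
        linarith
      obtain ⟨p, hps, hpmem⟩ := ((htop.eventually (eventually_ge_atTop s)).and
        (Ioo_mem_nhdsGT_of_mem (left_mem_Ico.2 hq.1))).exists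
      have hk := hkey p q (hsub ⟨hpmem.1, hpmem.2.trans hqmem.2⟩) (hsub hqmem)
        hpmem.2.le hqmem.2
      have hmono := psiBV_mono hps
      linarith
    have hlow : ∀ q ∈ Ioc a η, 1 / Real.sqrt (M q) ≤ Real.sqrt 6 * u' q := fun q hq =>
      psiBV_key_algebra (hu'1 q hq)
        (hM_pos' q ⟨hq.1, le_of_lt (lt_of_le_of_lt hq.2 hηmem.2)⟩) (hlim1 q hq)
    -- integrability on (a, η]
    have hIocsub : Ioc a η ⊆ Ioo a (a + δ) := fun t ht => ⟨ht.1, lt_of_le_of_lt ht.2 hηmem.2⟩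
    have hu'η : IntegrableOn u' (Ioc a η) := hu'_int.mono_set (fun t ht => hsub (hIocsub ht))
    have I1 : IntegrableOn (fun z => 1 / Real.sqrt (M z)) (Ioc a η) := by
      refine Integrable.mono' (hu'η.const_mul (Real.sqrt 6))
        ((hMcontOn _ hIocsub).aestronglyMeasurable measurableSet_Ioc) ?_
      rw [ae_restrict_iff' measurableSet_Ioc]
      refine Eventually.of_forall (fun t ht => ?_)
      have hMt : 0 < M t := hM_pos' t ⟨ht.1, (hIocsub ht).2.le⟩
      rw [Real.norm_eq_abs, abs_of_pos (by positivity)]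
      exact hlow t ht
    have hIcosub : Ico η (a + δ) ⊆ Ioo a (a + δ) := fun t ht => ⟨hηmem.1.trans_le ht.1, ht.2⟩
    have I2 : IntegrableOn (fun z => 1 / Real.sqrt (M z)) (Ico η (a + δ)) := by
      have hMη : 0 < M η := hM_pos' η ⟨hηmem.1, hηmem.2.le⟩
      refine Integrable.mono'
        (show Integrable (fun _ : ℝ => 1 / Real.sqrt (M η)) (volume.restrict (Ico η (a + δ)))
          from integrableOn_const measure_Ico_lt_top.ne)
        ((hMcontOn _ hIcosub).aestronglyMeasurable measurableSet_Ico) ?_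
      rw [ae_restrict_iff' measurableSet_Ico]
      refine Eventually.of_forall (fun t ht => ?_)
      have hMt : 0 < M t := hM_pos' t ⟨hηmem.1.trans_le ht.1, ht.2.le⟩
      rw [Real.norm_eq_abs, abs_of_pos (by positivity)]
      refine one_div_le_one_div_of_le (Real.sqrt_pos.2 hMη) ?_
      exact Real.sqrt_le_sqrt (hMmono η t hηmem.1 ht.1 ht.2)
    have hint : IntegrableOn (fun z => 1 / Real.sqrt (M z)) (Ioo a (a + δ)) := by
      refine (I1.union I2).mono_set (fun t ht => ?_)
      rcases le_or_gt t η with h | h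
      · exact Or.inl ⟨ht.1, h⟩
      · exact Or.inr ⟨h.le, ht.2⟩
    exact hM_nonint hint
  refine ⟨⟨_, AntitoneOn.tendsto_nhdsWithin_Ioo_right hIoo hanti hbdd⟩, ?_⟩
  -- part 2
  intro c hc
  obtain ⟨C, hC⟩ := hbdd
  have hCb : ∀ t ∈ Ioo a b, u' t ≤ C := fun t ht => hC (mem_image_of_mem u' ht)
  set xi : ℕ → ℝ := fun n => a + (c - a)/(n + 2) with hxidef
  have hca : 0 < c - a := by linarith [hc.1]
  have hxi_mem : ∀ n : ℕ, xi n ∈ Ioc a c := by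
    intro n
    constructor
    · have : 0 < (c - a)/((n:ℝ) + 2) := by positivity
      show a < a + (c - a)/((n:ℝ) + 2)
      linarith
    · have h1 : (c - a)/((n:ℝ) + 2) ≤ c - a := by
        refine div_le_self hca.le (by linarith [Nat.cast_nonneg (α := ℝ) n])
      show a + (c - a)/((n:ℝ) + 2) ≤ c
      linarith
  have hxi_tend : Tendsto xi atTop (𝓝 a) := by
    have h0 : Tendsto (fun n : ℕ => (c - a)/((n:ℝ) + 2)) atTop (𝓝 0) :=
      Tendsto.div_atTop tendsto_const_nhds
        (tendsto_atTop_add_const_right atTop 2 tendsto_natCast_atTop_atTop)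
    have h1 : Tendsto (fun n : ℕ => a + (c - a)/((n:ℝ) + 2)) atTop (𝓝 (a + 0)) :=
      Tendsto.add tendsto_const_nhds h0
    rw [add_zero] at h1
    exact h1
  have hbound : ∀ n : ℕ, (∫ t in Ioc (xi n) c, ‖u'' t‖) ≤ C - u' c := by
    intro n
    obtain ⟨hint, hrep⟩ := hu'_locAC (xi n) c (hxi_mem n).1 (hxi_mem n).2 hc.2
    have hrc := hrep c ⟨(hxi_mem n).2, le_rfl⟩
    have hcongr : ∫ t in Ioc (xi n) c, ‖u'' t‖ = ∫ t in Ioc (xi n) c, (-u'' t) := by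
      refine integral_congr_ae ?_
      filter_upwards [ae_restrict_mem measurableSet_Ioc, ae_restrict_of_ae hae] with t ht h2
      have hns := (h2 ⟨(hxi_mem n).1.trans ht.1, lt_of_le_of_lt ht.2 hc.2⟩).1
      rw [Real.norm_eq_abs, abs_of_nonpos hns]
    have hval : ∫ t in Ioc (xi n) c, u'' t = u' c - u' (xi n) := by
      rw [← intervalIntegral.integral_of_le (hxi_mem n).2]
      linarith [hrc]
    have hCn := hCb (xi n) ⟨(hxi_mem n).1, lt_of_le_of_lt (hxi_mem n).2 hc.2⟩
    rw [hcongr, MeasureTheory.integral_neg, hval]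
    linarith
  have hfi : ∀ n : ℕ, IntegrableOn u'' (Ioc (xi n) c) :=
    fun n => (hu'_locAC (xi n) c (hxi_mem n).1 (hxi_mem n).2 hc.2).1.mono_set
      Ioc_subset_Icc_self
  have hres := integrableOn_Ioc_of_intervalIntegral_norm_bounded hfi hxi_tend
    tendsto_const_nhds (Eventually.of_forall hbound)
  exact hres.mono_set Ioo_subset_Ioc_self
end
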